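/- arXiv:2108.00025 — 3 statements merged into one kernel-verified Lean document; each statement's English description precedes it below -/
import Mathlib

section
/- Let A and A' be unital C*-algebras, P₁ a nontrivial symmetric projection in A, P₂ = I_A − P₁, and suppose A satisfies (♠): for j ∈ {1,2}, P_j A X = {0} implies X = 0. Fix an integer n ≥ 2 and let φ: A → A' be a bijective map with φ(I_A) = I_{A'} satisfying (•): φ(p_{n*}(A,B,Ξ,…,Ξ)) = p_{n*}(φ(A),φ(B),φ(Ξ),…,φ(Ξ)) for all A, B ∈ A and Ξ ∈ {P₁, P₂, I_A}. Then φ is *-additive, i.e., φ(A + B) = φ(A) + φ(B) and φ(A*) = φ(A)* for all A, B ∈ A. -/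
/-- The `*`-Lie product `[x,y]_* = xy - y x*`. -/
def starLie {R : Type*} [Ring R] [StarRing R] (x y : R) : R := x * y - y * star x

/-- `pn n a b xi = p_{n*}(a, b, xi, ..., xi)` (with `n - 2` trailing copies of `xi`). -/
def pn {R : Type*} [Ring R] [StarRing R] (n : ℕ) (a b ξ : R) : R :=
  (fun z => starLie z ξ)^[n - 2] (starLie a b)

set_option linter.unusedSectionVars false
set_option linter.unusedVariables false

namespace SAP

variable {R : Type*} [Ring R] [StarRing R]

def PP (k : ℕ) (a b ξ : R) : R := (fun z => starLie z ξ)^[k] (starLie a b)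

lemma pn_eq_PP (n : ℕ) (a b ξ : R) : pn n a b ξ = PP (n - 2) a b ξ := rfl

lemma starLie_add_left (x y z : R) : starLie (x + y) z = starLie x z + starLie y z := by
  simp only [starLie, add_mul, star_add, mul_add]; abel

lemma starLie_add_right (x y z : R) : starLie x (y + z) = starLie x y + starLie x z := by
  simp only [starLie, add_mul, mul_add]; abel

lemma starLie_sub_right (x y z : R) : starLie x (y - z) = starLie x y - starLie x z := by
  simp only [starLie, sub_mul, mul_sub]; abel

lemma starLie_sub_left (x y z : R) : starLie (x - y) z = starLie x z - starLie y z := by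
  simp only [starLie, sub_mul, star_sub, mul_sub]; abel

lemma starLie_zero_right (x : R) : starLie x 0 = 0 := by simp [starLie]

lemma starLie_zero_left (x : R) : starLie 0 x = 0 := by simp [starLie]

lemma iter_add (ξ : R) (k : ℕ) (x y : R) :
    (fun z => starLie z ξ)^[k] (x + y)
      = (fun z => starLie z ξ)^[k] x + (fun z => starLie z ξ)^[k] y := by
  induction k generalizing x y with
  | zero => rfl
  | succ k ih =>
      rw [Function.iterate_succ_apply, Function.iterate_succ_apply,
        Function.iterate_succ_apply]
      simp only [starLie_add_left]
      exact ih _ _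

lemma iter_zero (ξ : R) (k : ℕ) : (fun z => starLie z ξ)^[k] (0 : R) = 0 := by
  induction k with
  | zero => rfl
  | succ k ih =>
      rw [Function.iterate_succ_apply]
      simp only [starLie_zero_left]
      exact ih

lemma iter_sub (ξ : R) (k : ℕ) (x y : R) :
    (fun z => starLie z ξ)^[k] (x - y)
      = (fun z => starLie z ξ)^[k] x - (fun z => starLie z ξ)^[k] y := by
  induction k generalizing x y with
  | zero => rfl
  | succ k ih =>
      rw [Function.iterate_succ_apply, Function.iterate_succ_apply,
        Function.iterate_succ_apply]
      simp only [starLie_sub_left]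
      exact ih _ _

lemma PP_add_left (k : ℕ) (a a' b ξ : R) :
    PP k (a + a') b ξ = PP k a b ξ + PP k a' b ξ := by
  unfold PP; rw [starLie_add_left, iter_add]

lemma PP_add_right (k : ℕ) (a b b' ξ : R) :
    PP k a (b + b') ξ = PP k a b ξ + PP k a b' ξ := by
  unfold PP; rw [starLie_add_right, iter_add]

lemma PP_zero_right (k : ℕ) (a ξ : R) : PP k a 0 ξ = 0 := by
  unfold PP; rw [starLie_zero_right, iter_zero]

lemma PP_zero_left (k : ℕ) (b ξ : R) : PP k 0 b ξ = 0 := by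
  unfold PP; rw [starLie_zero_left, iter_zero]

/-- `[x, ξ]` is skew when `ξ` is self-adjoint. -/
lemma star_starLie (ξ : R) (hξ : star ξ = ξ) (x : R) :
    star (starLie x ξ) = - starLie x ξ := by
  simp only [starLie, star_sub, star_mul, star_star, hξ]; abel



lemma starLie_eq_star_imp {t m : R} (h : starLie t m = star (starLie t m)) :
    t * (m + star m) = (m + star m) * star t := by
  have h2 : star (starLie t m) = star m * star t - t * star m := by
    simp [starLie, star_sub, star_mul, star_star]
  rw [h2, starLie, sub_eq_sub_iff_add_eq_add] at h
  rw [mul_add, add_mul]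
  exact h.trans (add_comm _ _)

lemma PP_zero_eq (a b ξ : R) : PP 0 a b ξ = starLie a b := rfl

section complexmod
variable [Module ℂ R] [StarModule ℂ R] [IsScalarTower ℂ R R] [SMulCommClass ℂ R R]

lemma csmul_cancel (c : ℂ) (hc : c ≠ 0) {x : R} (h : c • x = 0) : x = 0 := by
  have := congrArg (fun y => c⁻¹ • y) h
  simpa [smul_smul, inv_mul_cancel₀ hc] using this

lemma add_self_zero {x : R} (h : x + x = 0) : x = 0 := by
  have : (2 : ℂ) • x = 0 := by rw [two_smul]; exact h
  exact csmul_cancel 2 two_ne_zero this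

lemma nsmul_cancel (j : ℕ) {x : R} (h : (2 ^ j) • x = 0) : x = 0 := by
  have h1 : ((2 ^ j : ℕ) : ℂ) • x = 0 := by rw [Nat.cast_smul_eq_nsmul]; exact h
  have h2 : ((2 ^ j : ℕ) : ℂ) ≠ 0 := by
    exact_mod_cast pow_ne_zero j (two_ne_zero)
  exact csmul_cancel _ h2 h1

lemma skew_sa_zero {x : R} (h1 : x = star x) (h2 : star x = -x) : x = 0 := by
  have : x + x = 0 := by nth_rewrite 1 [h1, h2]; abel
  exact add_self_zero this

lemma iter_one_skew (k : ℕ) (s : R) (hs : star s = -s) :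
    (fun z => starLie z 1)^[k] s = 2 ^ k • s := by
  induction k with
  | zero => simp
  | succ k ih =>
      rw [Function.iterate_succ_apply]
      have h1 : starLie s (1:R) = s + s := by
        simp [starLie, hs, sub_neg_eq_add]
      rw [h1, iter_add, ih, pow_succ]
      rw [show (2:ℕ)^k * 2 = 2^k + 2^k by ring, add_smul]

/-- If `F₁ w = 0` then `w` is self-adjoint. -/
lemma F1_zero {k : ℕ} {w : R} (h : (fun z => starLie z 1)^[k] w = 0) : w = star w := by
  cases k with
  | zero => simp at h; simp [h]
  | succ j =>
      rw [Function.iterate_succ_apply] at h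
      have hskew : star (starLie w 1) = - starLie w 1 := star_starLie 1 (star_one R) w
      rw [iter_one_skew j _ hskew] at h
      have h2 : starLie w 1 = 0 := nsmul_cancel j h
      have : w - star w = 0 := by simpa [starLie] using h2
      rw [sub_eq_zero] at this; exact this

lemma PP_one_val (k : ℕ) (a b : R) :
    PP k a b 1 = (fun z => starLie z 1)^[k] (starLie a b) := rfl

lemma PP_skew_one (k : ℕ) (a b : R) (h : star (starLie a b) = - starLie a b) :
    PP k a b 1 = 2 ^ k • starLie a b := iter_one_skew k _ h

/-- value of `P x ξ' 1` for self-adjoint `ξ'`. -/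
lemma PP_sa_one (k : ℕ) (x ξ' : R) (hξ : star ξ' = ξ') :
    PP k x ξ' 1 = 2 ^ k • (x * ξ' - ξ' * star x) :=
  PP_skew_one k x ξ' (by simpa [starLie] using star_starLie ξ' hξ x)


lemma starLie_I1 (z : R) : starLie (Complex.I • (1:R)) z = Complex.I • z + Complex.I • z := by
  have h1 : (Complex.I • (1:R)) * z = Complex.I • z := by
    rw [smul_mul_assoc, one_mul]
  have h2 : star (Complex.I • (1:R)) = (-Complex.I) • (1:R) := by
    rw [star_smul, star_one, Complex.star_def, Complex.conj_I]
  rw [starLie, h1, h2, mul_smul_comm, mul_one, neg_smul, sub_neg_eq_add]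

lemma PP_I1_succ (j : ℕ) (z : R) :
    PP (j + 1) (Complex.I • (1:R)) z 1 = 2 ^ (j + 1) • (Complex.I • (z + star z)) := by
  unfold PP
  rw [Function.iterate_succ_apply]
  have h0 : starLie (Complex.I • (1:R)) z = Complex.I • z + Complex.I • z := starLie_I1 z
  have h1 : starLie (Complex.I • z + Complex.I • z) (1 : R)
      = Complex.I • (z + star z) + Complex.I • (z + star z) := by
    rw [starLie, mul_one, one_mul, star_add]
    rw [show star (Complex.I • z) = (-Complex.I) • (star z) by
      rw [star_smul, Complex.star_def, Complex.conj_I]]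
    simp only [smul_add, neg_smul]
    abel
  have hskew : star (Complex.I • (z + star z)) = -(Complex.I • (z + star z)) := by
    rw [star_smul, Complex.star_def, Complex.conj_I, star_add, star_star, neg_smul, add_comm]
  rw [h0]
  show (fun z => starLie z 1)^[j] (starLie (Complex.I • z + Complex.I • z) 1)
      = 2 ^ (j + 1) • (Complex.I • (z + star z))
  rw [h1, iter_add, iter_one_skew j _ hskew]
  rw [show (2:ℕ)^(j+1) = 2^j + 2^j by ring, add_smul]

lemma I_sa_zero {μ : R} (hsa : star μ = μ)
    (h : star (Complex.I • μ + Complex.I • μ) = Complex.I • μ + Complex.I • μ) : μ = 0 := by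
  have h2 : star (Complex.I • μ + Complex.I • μ) = -(Complex.I • μ + Complex.I • μ) := by
    rw [star_add, star_smul, Complex.star_def, Complex.conj_I, hsa, neg_smul, neg_add]
  have h3 : Complex.I • μ + Complex.I • μ = 0 := skew_sa_zero h.symm h2
  have h4 : Complex.I • μ = 0 := add_self_zero h3
  exact csmul_cancel _ Complex.I_ne_zero h4

lemma I_sa_zero' {μ : R} (hsa : star μ = μ) (j : ℕ)
    (h : (2 ^ (j+1)) • (Complex.I • (μ + star μ)) = 0) : μ = 0 := by
  have h1 : Complex.I • (μ + star μ) = 0 := nsmul_cancel (j+1) h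
  have h2 : μ + star μ = 0 := csmul_cancel _ Complex.I_ne_zero h1
  rw [hsa] at h2
  exact add_self_zero h2

end complexmod

end SAP


section Main

set_option linter.unusedSectionVars false
set_option maxHeartbeats 1000000

variable {A A' : Type*}
  [Ring A] [StarRing A] [Module ℂ A] [StarModule ℂ A]
  [IsScalarTower ℂ A A] [SMulCommClass ℂ A A]
  [Ring A'] [StarRing A'] [Module ℂ A'] [StarModule ℂ A']
  [IsScalarTower ℂ A' A'] [SMulCommClass ℂ A' A']

theorem main_additivity
    (k : ℕ) (φ : A → A') (e : A)
    (he : e * e = e) (hse : star e = e)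
    (hinj : Function.Injective φ)
    (hsur : Function.Surjective φ)
    (hone : φ 1 = 1)
    (hrel : ∀ a b ξ : A, (ξ = e ∨ ξ = 1 - e ∨ ξ = 1) →
      φ (SAP.PP k a b ξ) = SAP.PP k (φ a) (φ b) (φ ξ))
    (hsp1 : ∀ X : A, (∀ Y : A, e * Y * X = 0) → X = 0)
    (hsp2 : ∀ X : A, (∀ Y : A, (1 - e) * Y * X = 0) → X = 0) :
    (∀ a b : A, φ (a + b) = φ a + φ b) ∧ (∀ a : A, φ (star a) = star (φ a)) := by
  open SAP in
  set f : A := 1 - e with hfdef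
  have hef : e * f = 0 := by rw [hfdef, mul_sub, mul_one, he, sub_self]
  have hfe : f * e = 0 := by rw [hfdef, sub_mul, one_mul, he, sub_self]
  have hff : f * f = f := by rw [hfdef]; rw [sub_mul, one_mul, mul_sub, mul_one, he]; abel
  have hsf : star f = f := by rw [hfdef, star_sub, star_one, hse]
  have hef1 : e + f = 1 := by rw [hfdef]; abel
  have hEE : ∀ x : A, e * (e * x) = e * x := fun x => by rw [← mul_assoc, he]
  have hEF : ∀ x : A, e * (f * x) = 0 := fun x => by rw [← mul_assoc, hef, zero_mul]
  have hFE : ∀ x : A, f * (e * x) = 0 := fun x => by rw [← mul_assoc, hfe, zero_mul]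
  have hFF : ∀ x : A, f * (f * x) = f * x := fun x => by rw [← mul_assoc, hff]
  -- φ 0 = 0
  have hzero : φ 0 = 0 := by
    have h := hrel 1 0 1 (Or.inr (Or.inr rfl))
    rw [SAP.PP_zero_right] at h
    rw [h]
    show SAP.PP k (φ 1) (φ 0) (φ 1) = 0
    rw [hone]
    unfold SAP.PP
    rw [show starLie (1:A') (φ 0) = 0 by simp [starLie], SAP.iter_zero]
  -- key relation lemmas
  have key2 : ∀ (S a b t ξ : A), φ S = φ a + φ b → (ξ = e ∨ ξ = f ∨ ξ = 1) →
      φ (SAP.PP k t a ξ + SAP.PP k t b ξ) = φ (SAP.PP k t a ξ) + φ (SAP.PP k t b ξ) →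
      SAP.PP k t S ξ = SAP.PP k t a ξ + SAP.PP k t b ξ := by
    intro S a b t ξ hS hξ hknown
    have h1 := hrel t S ξ hξ
    rw [hS, SAP.PP_add_right, ← hrel t a ξ hξ, ← hrel t b ξ hξ, ← hknown] at h1
    exact hinj h1
  have key1 : ∀ (S a b t ξ : A), φ S = φ a + φ b → (ξ = e ∨ ξ = f ∨ ξ = 1) →
      φ (SAP.PP k a t ξ + SAP.PP k b t ξ) = φ (SAP.PP k a t ξ) + φ (SAP.PP k b t ξ) →
      SAP.PP k S t ξ = SAP.PP k a t ξ + SAP.PP k b t ξ := by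
    intro S a b t ξ hS hξ hknown
    have h1 := hrel S t ξ hξ
    rw [hS, SAP.PP_add_left, ← hrel a t ξ hξ, ← hrel b t ξ hξ, ← hknown] at h1
    exact hinj h1
  -- versions concluding on m, with S = a + b + m
  have key2m : ∀ (a b m t ξ : A), φ (a + b + m) = φ a + φ b → (ξ = e ∨ ξ = f ∨ ξ = 1) →
      φ (SAP.PP k t a ξ + SAP.PP k t b ξ) = φ (SAP.PP k t a ξ) + φ (SAP.PP k t b ξ) →
      SAP.PP k t m ξ = 0 := by
    intro a b m t ξ hS hξ hknown
    have h := key2 (a + b + m) a b t ξ hS hξ hknown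
    rw [SAP.PP_add_right, SAP.PP_add_right] at h
    have := sub_eq_zero.mpr h
    rw [add_sub_assoc] at this
    simpa using this
  have key1m : ∀ (a b m t ξ : A), φ (a + b + m) = φ a + φ b → (ξ = e ∨ ξ = f ∨ ξ = 1) →
      φ (SAP.PP k a t ξ + SAP.PP k b t ξ) = φ (SAP.PP k a t ξ) + φ (SAP.PP k b t ξ) →
      SAP.PP k m t ξ = 0 := by
    intro a b m t ξ hS hξ hknown
    have h := key1 (a + b + m) a b t ξ hS hξ hknown
    rw [SAP.PP_add_left, SAP.PP_add_left] at h
    have := sub_eq_zero.mpr h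
    rw [add_sub_assoc] at this
    simpa using this
  -- zero-pair discharges
  have kn0l : ∀ X Y : A, X = 0 → φ (X + Y) = φ X + φ Y := by
    intro X Y h; rw [h, zero_add, hzero, zero_add]
  have kn0r : ∀ X Y : A, Y = 0 → φ (X + Y) = φ X + φ Y := by
    intro X Y h; rw [h, add_zero, hzero, add_zero]
  have PPz : ∀ (a b ξ : A), starLie a b = 0 → SAP.PP k a b ξ = 0 := by
    intro a b ξ h; unfold SAP.PP; rw [h, SAP.iter_zero]
  -- from second-slot relation with self-adjoint m: bracket vanishes
  have saW : ∀ (t m : A), star m = m → SAP.PP k t m 1 = 0 → starLie t m = 0 := by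
    intro t m hsa h
    have h' : (fun z => starLie z (1:A))^[k] (starLie t m) = 0 := h
    have hW := SAP.F1_zero h'
    have hW2 : star (starLie t m) = - starLie t m := by
      simp only [starLie, star_sub, star_mul, star_star, hsa]; abel
    exact SAP.skew_sa_zero hW hW2
  -- first-slot bracket against s.a. ξ' vanishes
  have brz : ∀ (t m : A), star t = t → SAP.PP k m t 1 = 0 → starLie m t = 0 := by
    intro t m ht h
    have h' : (fun z => starLie z (1:A))^[k] (starLie m t) = 0 := h
    exact SAP.skew_sa_zero (SAP.F1_zero h') (SAP.star_starLie t ht m)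
  -- ============ Claim K-EF : φ 1 = φ e + φ f ============
  have KEF : φ 1 = φ e + φ f := by
    obtain ⟨S, hS⟩ := hsur (φ e + φ f)
    have hm : S = e + f + (S - 1) := by rw [hef1]; abel
    set m := S - 1 with hmdef
    have hφm : φ (e + f + m) = φ e + φ f := by rw [← hm]; exact hS
    -- stage 1 : starLie m e = 0, starLie m f = 0
    have h1 : starLie m e = 0 := by
      apply brz e m hse
      apply key1m e f m e 1 hφm (Or.inr (Or.inr rfl))
      apply kn0l
      apply PPz
      simp [starLie, he, hse]
    have h2 : starLie m f = 0 := by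
      apply brz f m hsf
      apply key1m e f m f 1 hφm (Or.inr (Or.inr rfl))
      apply kn0r
      apply PPz
      simp [starLie, hfe, hsf, hff]
    have hme : m * e = e * star m := by
      rw [starLie] at h1; exact sub_eq_zero.mp h1
    have hmf : m * f = f * star m := by
      rw [starLie] at h2; exact sub_eq_zero.mp h2
    have hmsa : star m = m := by
      have h3 : m * e + m * f = e * star m + f * star m := by rw [hme, hmf]
      rw [← mul_add, ← add_mul, hef1, mul_one, one_mul] at h3
      exact h3.symm
    have hcom : m * e = e * m := by rw [hme, hmsa]
    have hcomf : m * f = f * m := by rw [hmf, hmsa]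
    -- stage 2 : second-slot t12 relation ⇒ f * m = 0
    have h12 : ∀ t : A, starLie (e * (t * f)) m = 0 := by
      intro t
      apply saW _ m hmsa
      apply key2m e f m (e * (t * f)) 1 hφm (Or.inr (Or.inr rfl))
      apply kn0l
      apply PPz
      simp [starLie, mul_assoc, star_mul, hse, hsf, he, hef, hfe, hff, hEE, hEF, hFE, hFF]
    have hfm : f * m = 0 := by
      apply hsp1
      intro Y
      have hG := h12 Y
      rw [starLie, sub_eq_zero] at hG
      -- hG : (e*(Y*f)) * m = m * star (e*(Y*f))
      have := congrArg (· * f) hG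
      simp only [star_mul, hse, hsf, mul_assoc, hef, hfe, he, hff, mul_zero, zero_mul,
        mul_one, one_mul] at this
      -- this : e * (Y * (f * (m * f))) = 0  (RHS dies)
      have hmf2 : f * (m * f) = f * m := by rw [hcomf, ← mul_assoc, hff]
      rw [hmf2] at this
      simpa [mul_assoc] using this
    have h21 : ∀ t : A, starLie (f * (t * e)) m = 0 := by
      intro t
      apply saW _ m hmsa
      apply key2m e f m (f * (t * e)) 1 hφm (Or.inr (Or.inr rfl))
      apply kn0r
      apply PPz
      simp [starLie, mul_assoc, star_mul, hse, hsf, he, hef, hfe, hff, hEE, hEF, hFE, hFF]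
    have hem : e * m = 0 := by
      apply hsp2
      intro Y
      have hG := h21 Y
      rw [starLie, sub_eq_zero] at hG
      have := congrArg (· * e) hG
      simp only [star_mul, hse, hsf, mul_assoc, hef, hfe, he, hff, mul_zero, zero_mul,
        mul_one, one_mul] at this
      have hme2 : e * (m * e) = e * m := by rw [hcom, ← mul_assoc, he]
      rw [hme2] at this
      simpa [mul_assoc, hfdef] using this
    have hmzero : m = 0 := by
      have : (e + f) * m = 0 := by rw [add_mul, hem, hfm, add_zero]
      rwa [hef1, one_mul] at this
    rw [hmzero, add_zero] at hφm
    rw [hef1] at hφm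
    exact hφm
  have rel2φ : ∀ (S a b t ξ : A), φ S = φ a + φ b → (ξ = e ∨ ξ = f ∨ ξ = 1) →
      φ (SAP.PP k t S ξ) = φ (SAP.PP k t a ξ) + φ (SAP.PP k t b ξ) := by
    intro S a b t ξ hS hξ
    have h1 := hrel t S ξ hξ
    rw [hS, SAP.PP_add_right, ← hrel t a ξ hξ, ← hrel t b ξ hξ] at h1
    exact h1
  have rel1φ : ∀ (S a b t ξ : A), φ S = φ a + φ b → (ξ = e ∨ ξ = f ∨ ξ = 1) →
      φ (SAP.PP k S t ξ) = φ (SAP.PP k a t ξ) + φ (SAP.PP k b t ξ) := by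
    intro S a b t ξ hS hξ
    have h1 := hrel S t ξ hξ
    rw [hS, SAP.PP_add_left, ← hrel a t ξ hξ, ← hrel b t ξ hξ] at h1
    exact h1
  have vb : ∀ (x ξ' : A), star ξ' = ξ' → SAP.PP k x ξ' 1 = 2^k • (x * ξ' - ξ' * star x) :=
    fun x ξ' h => SAP.PP_sa_one k x ξ' h
  have SPLIT : ∀ x : A,
      φ (2^k • (x*e - e*star x) + 2^k • (x*f - f*star x))
        = φ (2^k • (x*e - e*star x)) + φ (2^k • (x*f - f*star x)) := by
    intro x
    have h1 := hrel x 1 1 (Or.inr (Or.inr rfl))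
    have h2 := hrel x e 1 (Or.inr (Or.inr rfl))
    have h3 := hrel x f 1 (Or.inr (Or.inr rfl))
    rw [hone] at h1 h2 h3
    rw [show SAP.PP k (φ x) (1:A') 1 = SAP.PP k (φ x) (φ e) 1 + SAP.PP k (φ x) (φ f) 1 by
        rw [← SAP.PP_add_right]; congr 1; rw [← KEF, hone]] at h1
    rw [← h2, ← h3] at h1
    rw [vb x 1 (star_one A), vb x e hse, vb x f hsf, mul_one, one_mul] at h1
    have hq : x*e - e*star x + (x*f - f*star x) = x - star x := by
      have h' : x*(e+f) - (e+f)*star x = x - star x := by rw [hef1, one_mul, mul_one]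
      rw [mul_add, add_mul] at h'
      rw [← h']; abel
    rw [← smul_add, hq]
    exact h1
  have SPLIT' : ∀ x : A,
      φ (2^k • (x*f - f*star x) + 2^k • (x*e - e*star x))
        = φ (2^k • (x*f - f*star x)) + φ (2^k • (x*e - e*star x)) := by
    intro x
    have h := SPLIT x
    rw [show (2^k:ℕ) • (x*f - f*star x) + (2^k:ℕ) • (x*e - e*star x)
        = (2^k:ℕ) • (x*e - e*star x) + (2^k:ℕ) • (x*f - f*star x) from add_comm _ _, h, add_comm]
  -- ============ P7 : partial additivity for A12 pairs ============
  have P7 : ∀ a b : A, ∃ μ : A, star μ = μ ∧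
      φ (e*(a*f) + e*(b*f) + μ) = φ (e*(a*f)) + φ (e*(b*f)) := by
    intro a b
    obtain ⟨S, hS⟩ := hsur (φ (e*(a*f)) + φ (e*(b*f)))
    have hφm : φ (e*(a*f) + e*(b*f) + (S - (e*(a*f) + e*(b*f)))) = φ (e*(a*f)) + φ (e*(b*f)) := by
      rw [show e*(a*f) + e*(b*f) + (S - (e*(a*f) + e*(b*f))) = S by abel]; exact hS
    refine ⟨S - (e*(a*f) + e*(b*f)), ?_, hφm⟩
    set m := S - (e*(a*f) + e*(b*f)) with hmdef
    have h1 : starLie m e = 0 := by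
      apply brz e m hse
      apply key1m _ _ m e 1 hφm (Or.inr (Or.inr rfl))
      apply kn0l
      apply PPz
      simp [starLie, mul_assoc, star_mul, hse, hsf, he, hef, hfe, hff, hEE, hEF, hFE, hFF]
    have h2 : starLie m f = 0 := by
      apply brz f m hsf
      apply key1m _ _ m f 1 hφm (Or.inr (Or.inr rfl))
      rw [vb (e*(a*f)) f hsf, vb (e*(b*f)) f hsf]
      have e1 : e*(a*f) * f - f * star (e*(a*f))
          = (e*(b*f) - star (e*(a*f))) * e - e * star (e*(b*f) - star (e*(a*f))) := by
        simp [star_mul, star_star, star_sub, mul_assoc, sub_mul, mul_sub, he, hff, hef, hfe,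
          hEE, hEF, hFE, hFF, hse, hsf]
        try abel
      have e2 : e*(b*f) * f - f * star (e*(b*f))
          = (e*(b*f) - star (e*(a*f))) * f - f * star (e*(b*f) - star (e*(a*f))) := by
        simp [star_mul, star_star, star_sub, mul_assoc, sub_mul, mul_sub, he, hff, hef, hfe,
          hEE, hEF, hFE, hFF, hse, hsf]
        try abel
      rw [e1, e2]
      exact SPLIT _
    have hme : m * e = e * star m := by rw [starLie] at h1; exact sub_eq_zero.mp h1
    have hmf : m * f = f * star m := by rw [starLie] at h2; exact sub_eq_zero.mp h2
    have h3 : m * e + m * f = e * star m + f * star m := by rw [hme, hmf]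
    rw [← mul_add, ← add_mul, hef1, mul_one, one_mul] at h3
    exact h3.symm
  -- ============ C7 : additivity for A12 pairs ============
  have C7 : ∀ a b : A, φ (e*(a*f) + e*(b*f)) = φ (e*(a*f)) + φ (e*(b*f)) := by
    intro a b
    obtain ⟨μ, hμsa, hμ⟩ := P7 a b
    suffices h0 : μ = 0 by rw [h0, add_zero] at hμ; exact hμ
    cases k with
    | zero =>
      obtain ⟨μ', hsa', hp'⟩ := P7 (Complex.I•a + Complex.I•a) (Complex.I•b + Complex.I•b)
      have hX2 : e*((Complex.I•a + Complex.I•a)*f)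
          = Complex.I•(e*(a*f)) + Complex.I•(e*(a*f)) := by
        simp [add_mul, mul_add, smul_mul_assoc, mul_smul_comm]
      have hY2 : e*((Complex.I•b + Complex.I•b)*f)
          = Complex.I•(e*(b*f)) + Complex.I•(e*(b*f)) := by
        simp [add_mul, mul_add, smul_mul_assoc, mul_smul_comm]
      rw [hX2, hY2] at hp'
      have hraw := rel2φ (e*(a*f) + e*(b*f) + μ) (e*(a*f)) (e*(b*f)) (Complex.I•(1:A)) 1 hμ
        (Or.inr (Or.inr rfl))
      rw [SAP.PP_zero_eq, SAP.PP_zero_eq, SAP.PP_zero_eq, SAP.starLie_I1, SAP.starLie_I1,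
        SAP.starLie_I1] at hraw
      rw [show Complex.I•(e*(a*f) + e*(b*f) + μ) + Complex.I•(e*(a*f) + e*(b*f) + μ)
          = (Complex.I•(e*(a*f)) + Complex.I•(e*(a*f)))
            + (Complex.I•(e*(b*f)) + Complex.I•(e*(b*f))) + (Complex.I•μ + Complex.I•μ) by
        simp only [smul_add]; abel] at hraw
      rw [← hp'] at hraw
      have h5 := hinj hraw
      have hμ2 : Complex.I•μ + Complex.I•μ = μ' := add_left_cancel h5
      apply SAP.I_sa_zero hμsa
      rw [hμ2]; exact hsa'
    | succ j =>
      have hraw := rel2φ (e*(a*f) + e*(b*f) + μ) (e*(a*f)) (e*(b*f)) (Complex.I•(1:A)) 1 hμ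
        (Or.inr (Or.inr rfl))
      rw [SAP.PP_I1_succ, SAP.PP_I1_succ, SAP.PP_I1_succ] at hraw
      rw [show (2^(j+1):ℕ) • (Complex.I•((e*(a*f) + e*(b*f) + μ) + star (e*(a*f) + e*(b*f) + μ)))
          = 2^(j+1) • (Complex.I•(e*(a*f) + star (e*(a*f))))
            + 2^(j+1) • (Complex.I•(e*(b*f) + star (e*(b*f))))
            + 2^(j+1) • (Complex.I•(μ + star μ)) by
        simp only [star_add, smul_add]; abel] at hraw
      have hkn : φ ((2^(j+1):ℕ) • (Complex.I•(e*(a*f) + star (e*(a*f))))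
            + (2^(j+1):ℕ) • (Complex.I•(e*(b*f) + star (e*(b*f)))))
          = φ ((2^(j+1):ℕ) • (Complex.I•(e*(a*f) + star (e*(a*f)))))
            + φ ((2^(j+1):ℕ) • (Complex.I•(e*(b*f) + star (e*(b*f))))) := by
        have e1 : Complex.I•(e*(a*f) + star (e*(a*f)))
            = (Complex.I • star (e*(a*f)) + Complex.I•(e*(b*f))) * e
              - e * star (Complex.I • star (e*(a*f)) + Complex.I•(e*(b*f))) := by
          simp [star_mul, star_star, star_add, star_smul, Complex.star_def, Complex.conj_I,
            smul_mul_assoc, mul_smul_comm, smul_add, neg_smul, sub_neg_eq_add, mul_assoc,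
            he, hff, hef, hfe, hEE, hEF, hFE, hFF, hse, hsf, add_mul, mul_add, mul_neg,
            neg_mul, neg_neg]
          try abel
        have e2 : Complex.I•(e*(b*f) + star (e*(b*f)))
            = (Complex.I • star (e*(a*f)) + Complex.I•(e*(b*f))) * f
              - f * star (Complex.I • star (e*(a*f)) + Complex.I•(e*(b*f))) := by
          simp [star_mul, star_star, star_add, star_smul, Complex.star_def, Complex.conj_I,
            smul_mul_assoc, mul_smul_comm, smul_add, neg_smul, sub_neg_eq_add, mul_assoc,
            he, hff, hef, hfe, hEE, hEF, hFE, hFF, hse, hsf, add_mul, mul_add, mul_neg,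
            neg_mul, neg_neg]
          try abel
        rw [e1, e2]
        exact SPLIT _
      have h6 := hraw.trans hkn.symm
      have h7 := hinj h6
      have hW : (2^(j+1):ℕ) • (Complex.I•(μ + star μ)) = 0 := add_eq_left.mp h7
      exact SAP.I_sa_zero' hμsa j hW
  -- ============ P8 : partial additivity for A21 pairs ============
  have P8 : ∀ a b : A, ∃ μ : A, star μ = μ ∧
      φ (f*(a*e) + f*(b*e) + μ) = φ (f*(a*e)) + φ (f*(b*e)) := by
    intro a b
    obtain ⟨S, hS⟩ := hsur (φ (f*(a*e)) + φ (f*(b*e)))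
    have hφm : φ (f*(a*e) + f*(b*e) + (S - (f*(a*e) + f*(b*e)))) = φ (f*(a*e)) + φ (f*(b*e)) := by
      rw [show f*(a*e) + f*(b*e) + (S - (f*(a*e) + f*(b*e))) = S by abel]; exact hS
    refine ⟨S - (f*(a*e) + f*(b*e)), ?_, hφm⟩
    set m := S - (f*(a*e) + f*(b*e)) with hmdef
    have h1 : starLie m f = 0 := by
      apply brz f m hsf
      apply key1m _ _ m f 1 hφm (Or.inr (Or.inr rfl))
      apply kn0l
      apply PPz
      simp [starLie, mul_assoc, star_mul, hse, hsf, he, hef, hfe, hff, hEE, hEF, hFE, hFF]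
    have h2 : starLie m e = 0 := by
      apply brz e m hse
      apply key1m _ _ m e 1 hφm (Or.inr (Or.inr rfl))
      rw [vb (f*(a*e)) e hse, vb (f*(b*e)) e hse]
      have e1 : f*(a*e) * e - e * star (f*(a*e))
          = (f*(a*e) - star (f*(b*e))) * e - e * star (f*(a*e) - star (f*(b*e))) := by
        simp [star_mul, star_star, star_sub, mul_assoc, sub_mul, mul_sub, he, hff, hef, hfe,
          hEE, hEF, hFE, hFF, hse, hsf]
        try abel
      have e2 : f*(b*e) * e - e * star (f*(b*e))
          = (f*(a*e) - star (f*(b*e))) * f - f * star (f*(a*e) - star (f*(b*e))) := by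
        simp [star_mul, star_star, star_sub, mul_assoc, sub_mul, mul_sub, he, hff, hef, hfe,
          hEE, hEF, hFE, hFF, hse, hsf]
        try abel
      rw [e1, e2]
      exact SPLIT _
    have hme : m * e = e * star m := by rw [starLie] at h2; exact sub_eq_zero.mp h2
    have hmf : m * f = f * star m := by rw [starLie] at h1; exact sub_eq_zero.mp h1
    have h3 : m * e + m * f = e * star m + f * star m := by rw [hme, hmf]
    rw [← mul_add, ← add_mul, hef1, mul_one, one_mul] at h3
    exact h3.symm
  -- ============ C8 : additivity for A21 pairs ============
  have C8 : ∀ a b : A, φ (f*(a*e) + f*(b*e)) = φ (f*(a*e)) + φ (f*(b*e)) := by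
    intro a b
    obtain ⟨μ, hμsa, hμ⟩ := P8 a b
    suffices h0 : μ = 0 by rw [h0, add_zero] at hμ; exact hμ
    cases k with
    | zero =>
      obtain ⟨μ', hsa', hp'⟩ := P8 (Complex.I•a + Complex.I•a) (Complex.I•b + Complex.I•b)
      have hX2 : f*((Complex.I•a + Complex.I•a)*e)
          = Complex.I•(f*(a*e)) + Complex.I•(f*(a*e)) := by
        simp [add_mul, mul_add, smul_mul_assoc, mul_smul_comm]
      have hY2 : f*((Complex.I•b + Complex.I•b)*e)
          = Complex.I•(f*(b*e)) + Complex.I•(f*(b*e)) := by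
        simp [add_mul, mul_add, smul_mul_assoc, mul_smul_comm]
      rw [hX2, hY2] at hp'
      have hraw := rel2φ (f*(a*e) + f*(b*e) + μ) (f*(a*e)) (f*(b*e)) (Complex.I•(1:A)) 1 hμ
        (Or.inr (Or.inr rfl))
      rw [SAP.PP_zero_eq, SAP.PP_zero_eq, SAP.PP_zero_eq, SAP.starLie_I1, SAP.starLie_I1,
        SAP.starLie_I1] at hraw
      rw [show Complex.I•(f*(a*e) + f*(b*e) + μ) + Complex.I•(f*(a*e) + f*(b*e) + μ)
          = (Complex.I•(f*(a*e)) + Complex.I•(f*(a*e)))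
            + (Complex.I•(f*(b*e)) + Complex.I•(f*(b*e))) + (Complex.I•μ + Complex.I•μ) by
        simp only [smul_add]; abel] at hraw
      rw [← hp'] at hraw
      have h5 := hinj hraw
      have hμ2 : Complex.I•μ + Complex.I•μ = μ' := add_left_cancel h5
      apply SAP.I_sa_zero hμsa
      rw [hμ2]; exact hsa'
    | succ j =>
      have hraw := rel2φ (f*(a*e) + f*(b*e) + μ) (f*(a*e)) (f*(b*e)) (Complex.I•(1:A)) 1 hμ
        (Or.inr (Or.inr rfl))
      rw [SAP.PP_I1_succ, SAP.PP_I1_succ, SAP.PP_I1_succ] at hraw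
      rw [show (2^(j+1):ℕ) • (Complex.I•((f*(a*e) + f*(b*e) + μ) + star (f*(a*e) + f*(b*e) + μ)))
          = 2^(j+1) • (Complex.I•(f*(a*e) + star (f*(a*e))))
            + 2^(j+1) • (Complex.I•(f*(b*e) + star (f*(b*e))))
            + 2^(j+1) • (Complex.I•(μ + star μ)) by
        simp only [star_add, smul_add]; abel] at hraw
      have hkn : φ ((2^(j+1):ℕ) • (Complex.I•(f*(a*e) + star (f*(a*e))))
            + (2^(j+1):ℕ) • (Complex.I•(f*(b*e) + star (f*(b*e)))))
          = φ ((2^(j+1):ℕ) • (Complex.I•(f*(a*e) + star (f*(a*e)))))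
            + φ ((2^(j+1):ℕ) • (Complex.I•(f*(b*e) + star (f*(b*e))))) := by
        have e1 : Complex.I•(f*(a*e) + star (f*(a*e)))
            = (Complex.I • (f*(a*e)) + Complex.I • star (f*(b*e))) * e
              - e * star (Complex.I • (f*(a*e)) + Complex.I • star (f*(b*e))) := by
          simp [star_mul, star_star, star_add, star_smul, Complex.star_def, Complex.conj_I,
            smul_mul_assoc, mul_smul_comm, smul_add, neg_smul, sub_neg_eq_add, mul_assoc,
            he, hff, hef, hfe, hEE, hEF, hFE, hFF, hse, hsf, add_mul, mul_add, mul_neg,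
            neg_mul, neg_neg]
          try abel
        have e2 : Complex.I•(f*(b*e) + star (f*(b*e)))
            = (Complex.I • (f*(a*e)) + Complex.I • star (f*(b*e))) * f
              - f * star (Complex.I • (f*(a*e)) + Complex.I • star (f*(b*e))) := by
          simp [star_mul, star_star, star_add, star_smul, Complex.star_def, Complex.conj_I,
            smul_mul_assoc, mul_smul_comm, smul_add, neg_smul, sub_neg_eq_add, mul_assoc,
            he, hff, hef, hfe, hEE, hEF, hFE, hFF, hse, hsf, add_mul, mul_add, mul_neg,
            neg_mul, neg_neg]
          try abel
        rw [e1, e2]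
        exact SPLIT _
      have h6 := hraw.trans hkn.symm
      have h7 := hinj h6
      have hW : (2^(j+1):ℕ) • (Complex.I•(μ + star μ)) = 0 := add_eq_left.mp h7
      exact SAP.I_sa_zero' hμsa j hW
  -- ============ P1p/C1 : pairs (A12, A21) ============
  have P1p : ∀ a b : A, ∃ μ : A, star μ = μ ∧
      φ (e*(a*f) + f*(b*e) + μ) = φ (e*(a*f)) + φ (f*(b*e)) := by
    intro a b
    obtain ⟨S, hS⟩ := hsur (φ (e*(a*f)) + φ (f*(b*e)))
    have hφm : φ (e*(a*f) + f*(b*e) + (S - (e*(a*f) + f*(b*e)))) = φ (e*(a*f)) + φ (f*(b*e)) := by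
      rw [show e*(a*f) + f*(b*e) + (S - (e*(a*f) + f*(b*e))) = S by abel]; exact hS
    refine ⟨S - (e*(a*f) + f*(b*e)), ?_, hφm⟩
    set m := S - (e*(a*f) + f*(b*e)) with hmdef
    have h1 : starLie m e = 0 := by
      apply brz e m hse
      apply key1m _ _ m e 1 hφm (Or.inr (Or.inr rfl))
      apply kn0l
      apply PPz
      simp [starLie, mul_assoc, star_mul, hse, hsf, he, hef, hfe, hff, hEE, hEF, hFE, hFF]
    have h2 : starLie m f = 0 := by
      apply brz f m hsf
      apply key1m _ _ m f 1 hφm (Or.inr (Or.inr rfl))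
      apply kn0r
      apply PPz
      simp [starLie, mul_assoc, star_mul, hse, hsf, he, hef, hfe, hff, hEE, hEF, hFE, hFF]
    have hme : m * e = e * star m := by rw [starLie] at h1; exact sub_eq_zero.mp h1
    have hmf : m * f = f * star m := by rw [starLie] at h2; exact sub_eq_zero.mp h2
    have h3 : m * e + m * f = e * star m + f * star m := by rw [hme, hmf]
    rw [← mul_add, ← add_mul, hef1, mul_one, one_mul] at h3
    exact h3.symm
  have C1 : ∀ a b : A, φ (e*(a*f) + f*(b*e)) = φ (e*(a*f)) + φ (f*(b*e)) := by
    intro a b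
    obtain ⟨μ, hμsa, hμ⟩ := P1p a b
    suffices h0 : μ = 0 by rw [h0, add_zero] at hμ; exact hμ
    cases k with
    | zero =>
      obtain ⟨μ', hsa', hp'⟩ := P1p (Complex.I•a + Complex.I•a) (Complex.I•b + Complex.I•b)
      have hX2 : e*((Complex.I•a + Complex.I•a)*f)
          = Complex.I•(e*(a*f)) + Complex.I•(e*(a*f)) := by
        simp [add_mul, mul_add, smul_mul_assoc, mul_smul_comm]
      have hY2 : f*((Complex.I•b + Complex.I•b)*e)
          = Complex.I•(f*(b*e)) + Complex.I•(f*(b*e)) := by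
        simp [add_mul, mul_add, smul_mul_assoc, mul_smul_comm]
      rw [hX2, hY2] at hp'
      have hraw := rel2φ (e*(a*f) + f*(b*e) + μ) (e*(a*f)) (f*(b*e)) (Complex.I•(1:A)) 1 hμ
        (Or.inr (Or.inr rfl))
      rw [SAP.PP_zero_eq, SAP.PP_zero_eq, SAP.PP_zero_eq, SAP.starLie_I1, SAP.starLie_I1,
        SAP.starLie_I1] at hraw
      rw [show Complex.I•(e*(a*f) + f*(b*e) + μ) + Complex.I•(e*(a*f) + f*(b*e) + μ)
          = (Complex.I•(e*(a*f)) + Complex.I•(e*(a*f)))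
            + (Complex.I•(f*(b*e)) + Complex.I•(f*(b*e))) + (Complex.I•μ + Complex.I•μ) by
        simp only [smul_add]; abel] at hraw
      rw [← hp'] at hraw
      have h5 := hinj hraw
      have hμ2 : Complex.I•μ + Complex.I•μ = μ' := add_left_cancel h5
      apply SAP.I_sa_zero hμsa
      rw [hμ2]; exact hsa'
    | succ j =>
      have hraw := rel2φ (e*(a*f) + f*(b*e) + μ) (e*(a*f)) (f*(b*e)) (Complex.I•(1:A)) 1 hμ
        (Or.inr (Or.inr rfl))
      rw [SAP.PP_I1_succ, SAP.PP_I1_succ, SAP.PP_I1_succ] at hraw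
      rw [show (2^(j+1):ℕ) • (Complex.I•((e*(a*f) + f*(b*e) + μ) + star (e*(a*f) + f*(b*e) + μ)))
          = 2^(j+1) • (Complex.I•(e*(a*f) + star (e*(a*f))))
            + 2^(j+1) • (Complex.I•(f*(b*e) + star (f*(b*e))))
            + 2^(j+1) • (Complex.I•(μ + star μ)) by
        simp only [star_add, smul_add]; abel] at hraw
      have hkn : φ ((2^(j+1):ℕ) • (Complex.I•(e*(a*f) + star (e*(a*f))))
            + (2^(j+1):ℕ) • (Complex.I•(f*(b*e) + star (f*(b*e)))))
          = φ ((2^(j+1):ℕ) • (Complex.I•(e*(a*f) + star (e*(a*f)))))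
            + φ ((2^(j+1):ℕ) • (Complex.I•(f*(b*e) + star (f*(b*e))))) := by
        have e1 : Complex.I•(e*(a*f) + star (e*(a*f)))
            = (Complex.I • star (e*(a*f)) + Complex.I • star (f*(b*e))) * e
              - e * star (Complex.I • star (e*(a*f)) + Complex.I • star (f*(b*e))) := by
          simp [star_mul, star_star, star_add, star_smul, Complex.star_def, Complex.conj_I,
            smul_mul_assoc, mul_smul_comm, smul_add, neg_smul, sub_neg_eq_add, mul_assoc,
            he, hff, hef, hfe, hEE, hEF, hFE, hFF, hse, hsf, add_mul, mul_add, mul_neg,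
            neg_mul, neg_neg]
          try abel
        have e2 : Complex.I•(f*(b*e) + star (f*(b*e)))
            = (Complex.I • star (e*(a*f)) + Complex.I • star (f*(b*e))) * f
              - f * star (Complex.I • star (e*(a*f)) + Complex.I • star (f*(b*e))) := by
          simp [star_mul, star_star, star_add, star_smul, Complex.star_def, Complex.conj_I,
            smul_mul_assoc, mul_smul_comm, smul_add, neg_smul, sub_neg_eq_add, mul_assoc,
            he, hff, hef, hfe, hEE, hEF, hFE, hFF, hse, hsf, add_mul, mul_add, mul_neg,
            neg_mul, neg_neg]
          try abel
        rw [e1, e2]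
        exact SPLIT _
      have h6 := hraw.trans hkn.symm
      have h7 := hinj h6
      have hW : (2^(j+1):ℕ) • (Complex.I•(μ + star μ)) = 0 := add_eq_left.mp h7
      exact SAP.I_sa_zero' hμsa j hW
  -- ============ COFF : pairs of mixed off-diagonal elements ============
  have COFF : ∀ a b c d : A,
      φ ((e*(a*f) + f*(b*e)) + (e*(c*f) + f*(d*e)))
        = φ (e*(a*f) + f*(b*e)) + φ (e*(c*f) + f*(d*e)) := by
    intro a b c d
    have h1 : φ ((e*(a*f) + f*(b*e)) + (e*(c*f) + f*(d*e)))
        = φ ((e*(a*f) + e*(c*f)) + (f*(b*e) + f*(d*e))) := by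
      rw [show (e*(a*f) + f*(b*e)) + (e*(c*f) + f*(d*e))
          = (e*(a*f) + e*(c*f)) + (f*(b*e) + f*(d*e)) by abel]
    have h2 : e*(a*f) + e*(c*f) = e*((a+c)*f) := by rw [add_mul, mul_add]
    have h3 : f*(b*e) + f*(d*e) = f*((b+d)*e) := by rw [add_mul, mul_add]
    rw [h1, h2, h3, C1 (a+c) (b+d), ← h2, ← h3, C7 a c, C8 b d, C1 a b, C1 c d]
    abel
  -- ============ P3''/C3'' : pairs (A11, A21) ============
  have P3 : ∀ a b : A, ∃ μ : A, star μ = μ ∧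
      φ (e*(a*e) + f*(b*e) + μ) = φ (e*(a*e)) + φ (f*(b*e)) := by
    intro a b
    obtain ⟨S, hS⟩ := hsur (φ (e*(a*e)) + φ (f*(b*e)))
    have hφm : φ (e*(a*e) + f*(b*e) + (S - (e*(a*e) + f*(b*e)))) = φ (e*(a*e)) + φ (f*(b*e)) := by
      rw [show e*(a*e) + f*(b*e) + (S - (e*(a*e) + f*(b*e))) = S by abel]; exact hS
    refine ⟨S - (e*(a*e) + f*(b*e)), ?_, hφm⟩
    set m := S - (e*(a*e) + f*(b*e)) with hmdef
    have h1 : starLie m f = 0 := by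
      apply brz f m hsf
      apply key1m _ _ m f 1 hφm (Or.inr (Or.inr rfl))
      apply kn0l
      apply PPz
      simp [starLie, mul_assoc, star_mul, hse, hsf, he, hef, hfe, hff, hEE, hEF, hFE, hFF]
    have h2 : starLie m e = 0 := by
      apply brz e m hse
      apply key1m _ _ m e 1 hφm (Or.inr (Or.inr rfl))
      rw [vb (e*(a*e)) e hse, vb (f*(b*e)) e hse]
      have e1 : e*(a*e) * e - e * star (e*(a*e))
          = (e*(a*e) - star (f*(b*e))) * e - e * star (e*(a*e) - star (f*(b*e))) := by
        simp [star_mul, star_star, star_sub, mul_assoc, sub_mul, mul_sub, he, hff, hef, hfe,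
          hEE, hEF, hFE, hFF, hse, hsf]
        try abel
      have e2 : f*(b*e) * e - e * star (f*(b*e))
          = (e*(a*e) - star (f*(b*e))) * f - f * star (e*(a*e) - star (f*(b*e))) := by
        simp [star_mul, star_star, star_sub, mul_assoc, sub_mul, mul_sub, he, hff, hef, hfe,
          hEE, hEF, hFE, hFF, hse, hsf]
        try abel
      rw [e1, e2]
      exact SPLIT _
    have hme : m * e = e * star m := by rw [starLie] at h2; exact sub_eq_zero.mp h2
    have hmf : m * f = f * star m := by rw [starLie] at h1; exact sub_eq_zero.mp h1
    have h3 : m * e + m * f = e * star m + f * star m := by rw [hme, hmf]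
    rw [← mul_add, ← add_mul, hef1, mul_one, one_mul] at h3
    exact h3.symm
  have C3 : ∀ a b : A, φ (e*(a*e) + f*(b*e)) = φ (e*(a*e)) + φ (f*(b*e)) := by
    intro a b
    obtain ⟨μ, hμsa, hμ⟩ := P3 a b
    suffices h0 : μ = 0 by rw [h0, add_zero] at hμ; exact hμ
    cases k with
    | zero =>
      obtain ⟨μ', hsa', hp'⟩ := P3 (Complex.I•a + Complex.I•a) (Complex.I•b + Complex.I•b)
      have hX2 : e*((Complex.I•a + Complex.I•a)*e)
          = Complex.I•(e*(a*e)) + Complex.I•(e*(a*e)) := by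
        simp [add_mul, mul_add, smul_mul_assoc, mul_smul_comm]
      have hY2 : f*((Complex.I•b + Complex.I•b)*e)
          = Complex.I•(f*(b*e)) + Complex.I•(f*(b*e)) := by
        simp [add_mul, mul_add, smul_mul_assoc, mul_smul_comm]
      rw [hX2, hY2] at hp'
      have hraw := rel2φ (e*(a*e) + f*(b*e) + μ) (e*(a*e)) (f*(b*e)) (Complex.I•(1:A)) 1 hμ
        (Or.inr (Or.inr rfl))
      rw [SAP.PP_zero_eq, SAP.PP_zero_eq, SAP.PP_zero_eq, SAP.starLie_I1, SAP.starLie_I1,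
        SAP.starLie_I1] at hraw
      rw [show Complex.I•(e*(a*e) + f*(b*e) + μ) + Complex.I•(e*(a*e) + f*(b*e) + μ)
          = (Complex.I•(e*(a*e)) + Complex.I•(e*(a*e)))
            + (Complex.I•(f*(b*e)) + Complex.I•(f*(b*e))) + (Complex.I•μ + Complex.I•μ) by
        simp only [smul_add]; abel] at hraw
      rw [← hp'] at hraw
      have h5 := hinj hraw
      have hμ2 : Complex.I•μ + Complex.I•μ = μ' := add_left_cancel h5
      apply SAP.I_sa_zero hμsa
      rw [hμ2]; exact hsa'
    | succ j =>
      have hraw := rel2φ (e*(a*e) + f*(b*e) + μ) (e*(a*e)) (f*(b*e)) (Complex.I•(1:A)) 1 hμ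
        (Or.inr (Or.inr rfl))
      rw [SAP.PP_I1_succ, SAP.PP_I1_succ, SAP.PP_I1_succ] at hraw
      rw [show (2^(j+1):ℕ) • (Complex.I•((e*(a*e) + f*(b*e) + μ) + star (e*(a*e) + f*(b*e) + μ)))
          = 2^(j+1) • (Complex.I•(e*(a*e) + star (e*(a*e))))
            + 2^(j+1) • (Complex.I•(f*(b*e) + star (f*(b*e))))
            + 2^(j+1) • (Complex.I•(μ + star μ)) by
        simp only [star_add, smul_add]; abel] at hraw
      have hkn : φ ((2^(j+1):ℕ) • (Complex.I•(e*(a*e) + star (e*(a*e))))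
            + (2^(j+1):ℕ) • (Complex.I•(f*(b*e) + star (f*(b*e)))))
          = φ ((2^(j+1):ℕ) • (Complex.I•(e*(a*e) + star (e*(a*e)))))
            + φ ((2^(j+1):ℕ) • (Complex.I•(f*(b*e) + star (f*(b*e))))) := by
        have e1 : Complex.I•(e*(a*e) + star (e*(a*e)))
            = (Complex.I • (e*(a*e)) + Complex.I • star (f*(b*e))) * e
              - e * star (Complex.I • (e*(a*e)) + Complex.I • star (f*(b*e))) := by
          simp [star_mul, star_star, star_add, star_smul, Complex.star_def, Complex.conj_I,
            smul_mul_assoc, mul_smul_comm, smul_add, neg_smul, sub_neg_eq_add, mul_assoc,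
            he, hff, hef, hfe, hEE, hEF, hFE, hFF, hse, hsf, add_mul, mul_add, mul_neg,
            neg_mul, neg_neg]
          try abel
        have e2 : Complex.I•(f*(b*e) + star (f*(b*e)))
            = (Complex.I • (e*(a*e)) + Complex.I • star (f*(b*e))) * f
              - f * star (Complex.I • (e*(a*e)) + Complex.I • star (f*(b*e))) := by
          simp [star_mul, star_star, star_add, star_smul, Complex.star_def, Complex.conj_I,
            smul_mul_assoc, mul_smul_comm, smul_add, neg_smul, sub_neg_eq_add, mul_assoc,
            he, hff, hef, hfe, hEE, hEF, hFE, hFF, hse, hsf, add_mul, mul_add, mul_neg,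
            neg_mul, neg_neg]
          try abel
        rw [e1, e2]
        exact SPLIT _
      have h6 := hraw.trans hkn.symm
      have h7 := hinj h6
      have hW : (2^(j+1):ℕ) • (Complex.I•(μ + star μ)) = 0 := add_eq_left.mp h7
      exact SAP.I_sa_zero' hμsa j hW
  -- ============ P4/C4 : pairs (A22, A12) ============
  have P4 : ∀ a b : A, ∃ μ : A, star μ = μ ∧
      φ (f*(a*f) + e*(b*f) + μ) = φ (f*(a*f)) + φ (e*(b*f)) := by
    intro a b
    obtain ⟨S, hS⟩ := hsur (φ (f*(a*f)) + φ (e*(b*f)))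
    have hφm : φ (f*(a*f) + e*(b*f) + (S - (f*(a*f) + e*(b*f)))) = φ (f*(a*f)) + φ (e*(b*f)) := by
      rw [show f*(a*f) + e*(b*f) + (S - (f*(a*f) + e*(b*f))) = S by abel]; exact hS
    refine ⟨S - (f*(a*f) + e*(b*f)), ?_, hφm⟩
    set m := S - (f*(a*f) + e*(b*f)) with hmdef
    have h1 : starLie m e = 0 := by
      apply brz e m hse
      apply key1m _ _ m e 1 hφm (Or.inr (Or.inr rfl))
      apply kn0l
      apply PPz
      simp [starLie, mul_assoc, star_mul, hse, hsf, he, hef, hfe, hff, hEE, hEF, hFE, hFF]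
    have h2 : starLie m f = 0 := by
      apply brz f m hsf
      apply key1m _ _ m f 1 hφm (Or.inr (Or.inr rfl))
      rw [vb (f*(a*f)) f hsf, vb (e*(b*f)) f hsf]
      have e1 : f*(a*f) * f - f * star (f*(a*f))
          = (f*(a*f) - star (e*(b*f))) * f - f * star (f*(a*f) - star (e*(b*f))) := by
        simp [star_mul, star_star, star_sub, mul_assoc, sub_mul, mul_sub, he, hff, hef, hfe,
          hEE, hEF, hFE, hFF, hse, hsf]
        try abel
      have e2 : e*(b*f) * f - f * star (e*(b*f))
          = (f*(a*f) - star (e*(b*f))) * e - e * star (f*(a*f) - star (e*(b*f))) := by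
        simp [star_mul, star_star, star_sub, mul_assoc, sub_mul, mul_sub, he, hff, hef, hfe,
          hEE, hEF, hFE, hFF, hse, hsf]
        try abel
      rw [e1, e2]
      exact SPLIT' _
    have hme : m * e = e * star m := by rw [starLie] at h1; exact sub_eq_zero.mp h1
    have hmf : m * f = f * star m := by rw [starLie] at h2; exact sub_eq_zero.mp h2
    have h3 : m * e + m * f = e * star m + f * star m := by rw [hme, hmf]
    rw [← mul_add, ← add_mul, hef1, mul_one, one_mul] at h3
    exact h3.symm
  have C4 : ∀ a b : A, φ (f*(a*f) + e*(b*f)) = φ (f*(a*f)) + φ (e*(b*f)) := by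
    intro a b
    obtain ⟨μ, hμsa, hμ⟩ := P4 a b
    suffices h0 : μ = 0 by rw [h0, add_zero] at hμ; exact hμ
    cases k with
    | zero =>
      obtain ⟨μ', hsa', hp'⟩ := P4 (Complex.I•a + Complex.I•a) (Complex.I•b + Complex.I•b)
      have hX2 : f*((Complex.I•a + Complex.I•a)*f)
          = Complex.I•(f*(a*f)) + Complex.I•(f*(a*f)) := by
        simp [add_mul, mul_add, smul_mul_assoc, mul_smul_comm]
      have hY2 : e*((Complex.I•b + Complex.I•b)*f)
          = Complex.I•(e*(b*f)) + Complex.I•(e*(b*f)) := by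
        simp [add_mul, mul_add, smul_mul_assoc, mul_smul_comm]
      rw [hX2, hY2] at hp'
      have hraw := rel2φ (f*(a*f) + e*(b*f) + μ) (f*(a*f)) (e*(b*f)) (Complex.I•(1:A)) 1 hμ
        (Or.inr (Or.inr rfl))
      rw [SAP.PP_zero_eq, SAP.PP_zero_eq, SAP.PP_zero_eq, SAP.starLie_I1, SAP.starLie_I1,
        SAP.starLie_I1] at hraw
      rw [show Complex.I•(f*(a*f) + e*(b*f) + μ) + Complex.I•(f*(a*f) + e*(b*f) + μ)
          = (Complex.I•(f*(a*f)) + Complex.I•(f*(a*f)))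
            + (Complex.I•(e*(b*f)) + Complex.I•(e*(b*f))) + (Complex.I•μ + Complex.I•μ) by
        simp only [smul_add]; abel] at hraw
      rw [← hp'] at hraw
      have h5 := hinj hraw
      have hμ2 : Complex.I•μ + Complex.I•μ = μ' := add_left_cancel h5
      apply SAP.I_sa_zero hμsa
      rw [hμ2]; exact hsa'
    | succ j =>
      have hraw := rel2φ (f*(a*f) + e*(b*f) + μ) (f*(a*f)) (e*(b*f)) (Complex.I•(1:A)) 1 hμ
        (Or.inr (Or.inr rfl))
      rw [SAP.PP_I1_succ, SAP.PP_I1_succ, SAP.PP_I1_succ] at hraw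
      rw [show (2^(j+1):ℕ) • (Complex.I•((f*(a*f) + e*(b*f) + μ) + star (f*(a*f) + e*(b*f) + μ)))
          = 2^(j+1) • (Complex.I•(f*(a*f) + star (f*(a*f))))
            + 2^(j+1) • (Complex.I•(e*(b*f) + star (e*(b*f))))
            + 2^(j+1) • (Complex.I•(μ + star μ)) by
        simp only [star_add, smul_add]; abel] at hraw
      have hkn : φ ((2^(j+1):ℕ) • (Complex.I•(f*(a*f) + star (f*(a*f))))
            + (2^(j+1):ℕ) • (Complex.I•(e*(b*f) + star (e*(b*f)))))
          = φ ((2^(j+1):ℕ) • (Complex.I•(f*(a*f) + star (f*(a*f)))))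
            + φ ((2^(j+1):ℕ) • (Complex.I•(e*(b*f) + star (e*(b*f))))) := by
        have e1 : Complex.I•(f*(a*f) + star (f*(a*f)))
            = (Complex.I • (f*(a*f)) + Complex.I • star (e*(b*f))) * f
              - f * star (Complex.I • (f*(a*f)) + Complex.I • star (e*(b*f))) := by
          simp [star_mul, star_star, star_add, star_smul, Complex.star_def, Complex.conj_I,
            smul_mul_assoc, mul_smul_comm, smul_add, neg_smul, sub_neg_eq_add, mul_assoc,
            he, hff, hef, hfe, hEE, hEF, hFE, hFF, hse, hsf, add_mul, mul_add, mul_neg,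
            neg_mul, neg_neg]
          try abel
        have e2 : Complex.I•(e*(b*f) + star (e*(b*f)))
            = (Complex.I • (f*(a*f)) + Complex.I • star (e*(b*f))) * e
              - e * star (Complex.I • (f*(a*f)) + Complex.I • star (e*(b*f))) := by
          simp [star_mul, star_star, star_add, star_smul, Complex.star_def, Complex.conj_I,
            smul_mul_assoc, mul_smul_comm, smul_add, neg_smul, sub_neg_eq_add, mul_assoc,
            he, hff, hef, hfe, hEE, hEF, hFE, hFF, hse, hsf, add_mul, mul_add, mul_neg,
            neg_mul, neg_neg]
          try abel
        rw [e1, e2]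
        exact SPLIT' _
      have h6 := hraw.trans hkn.symm
      have h7 := hinj h6
      have hW : (2^(j+1):ℕ) • (Complex.I•(μ + star μ)) = 0 := add_eq_left.mp h7
      exact SAP.I_sa_zero' hμsa j hW
  -- ============ C9 : pairs (A11, A11) ============
  have C9 : ∀ a b : A, φ (e*(a*e) + e*(b*e)) = φ (e*(a*e)) + φ (e*(b*e)) := by
    intro a b
    obtain ⟨S, hS⟩ := hsur (φ (e*(a*e)) + φ (e*(b*e)))
    have hφm : φ (e*(a*e) + e*(b*e) + (S - (e*(a*e) + e*(b*e)))) = φ (e*(a*e)) + φ (e*(b*e)) := by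
      rw [show e*(a*e) + e*(b*e) + (S - (e*(a*e) + e*(b*e))) = S by abel]; exact hS
    set m := S - (e*(a*e) + e*(b*e)) with hmdef
    suffices hm0 : m = 0 by
      rw [hm0, add_zero] at hφm; exact hφm
    -- stage 1 : [m, f] = 0
    have h1 : starLie m f = 0 := by
      apply brz f m hsf
      apply key1m _ _ m f 1 hφm (Or.inr (Or.inr rfl))
      apply kn0l
      apply PPz
      simp [starLie, mul_assoc, star_mul, hse, hsf, he, hef, hfe, hff, hEE, hEF, hFE, hFF]
    have hmf : m * f = f * star m := by rw [starLie] at h1; exact sub_eq_zero.mp h1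
    -- stage 2 : t12 probes give (e t f)(m + m*) = (m + m*) (e t f)^*
    have h12 : ∀ t : A, starLie (e*(t*f)) m = star (starLie (e*(t*f)) m) := by
      intro t
      have hp : SAP.PP k (e*(t*f)) m 1 = 0 := by
        apply key2m _ _ m _ 1 hφm (Or.inr (Or.inr rfl))
        apply kn0l
        apply PPz
        simp [starLie, mul_assoc, star_mul, hse, hsf, he, hef, hfe, hff, hEE, hEF, hFE, hFF]
      exact SAP.F1_zero hp
    have hE : ∀ t : A, (e*(t*f)) * (m + star m) = (m + star m) * star (e*(t*f)) :=
      fun t => SAP.starLie_eq_star_imp (h12 t)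
    -- i-trick : (e t f)(m + m*) = 0
    have hL0 : ∀ t : A, (e*(t*f)) * (m + star m) = 0 := by
      intro t
      have h1' := hE t
      have h2' := hE (Complex.I • t)
      have e1 : e*((Complex.I•t)*f) = Complex.I•(e*(t*f)) := by
        rw [smul_mul_assoc, mul_smul_comm]
      have e2 : star (Complex.I•(e*(t*f))) = (-Complex.I)•star (e*(t*f)) := by
        rw [star_smul, Complex.star_def, Complex.conj_I]
      rw [e1, e2, smul_mul_assoc, mul_smul_comm, ← h1'] at h2'
      -- h2' : I•((etf)(m+m*)) = (-I)•((etf)(m+m*))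
      rw [neg_smul] at h2'
      have h3 : Complex.I•((e*(t*f)) * (m + star m)) + Complex.I•((e*(t*f)) * (m + star m)) = 0 := by
        nth_rewrite 2 [h2']
        simp
      exact SAP.csmul_cancel _ Complex.I_ne_zero (SAP.add_self_zero h3)
    have hfh : f * (m + star m) = 0 := by
      apply hsp1
      intro Y
      simpa [mul_assoc] using hL0 Y
    have hfsm : f * star m = -(f * m) := by
      have h4 := hfh
      rw [mul_add, add_comm] at h4
      exact eq_neg_of_add_eq_zero_left h4
    have hmf2 : m * f = -(f * m) := by rw [hmf, hfsm]
    have hfm' : f * m = -(m * f) := by rw [hmf2, neg_neg]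
    have hmf0 : m * f = 0 := by
      have w1 : f*(m*f) = m*f := by rw [hmf, hFF, ← hmf]
      have w2 : f*(m*f) = -(m*f) := by
        rw [← mul_assoc, hfm', neg_mul, mul_assoc, hff]
      have hx : m*f = -(m*f) := w1.symm.trans w2
      have h5 : m*f + m*f = 0 := by nth_rewrite 2 [hx]; simp
      exact SAP.add_self_zero h5
    have hfm0 : f * m = 0 := by rw [hfm', hmf0, neg_zero]
    have hem1 : e * m = m := by
      have h6 : (e + f) * m = m := by rw [hef1, one_mul]
      rw [add_mul, hfm0, add_zero] at h6; exact h6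
    have hme1 : m * e = m := by
      have h6 : m * (e + f) = m := by rw [hef1, mul_one]
      rw [mul_add, hmf0, add_zero] at h6; exact h6
    have hsme : e * star m = star m := by
      conv_rhs => rw [← hme1, star_mul, hse]
    have hsme2 : star m * e = star m := by
      conv_rhs => rw [← hem1, star_mul, hse]
    -- bracket values against t21
    have hbrX : ∀ t : A, starLie (e*(a*e)) (f*(t*e)) = f*((-(t*(e*(star a*e))))*e) := by
      intro t
      simp [starLie, mul_assoc, star_mul, hse, hsf, he, hef, hfe, hff, hEE, hEF, hFE, hFF,
        neg_mul, mul_neg]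
    have hbrY : ∀ t : A, starLie (e*(b*e)) (f*(t*e)) = f*((-(t*(e*(star b*e))))*e) := by
      intro t
      simp [starLie, mul_assoc, star_mul, hse, hsf, he, hef, hfe, hff, hEE, hEF, hFE, hFF,
        neg_mul, mul_neg]
    have hbrM : ∀ t : A, starLie m (f*(t*e)) = f*((-(t*(e*star m)))*e) := by
      intro t
      rw [starLie]
      rw [show m * (f*(t*e)) = 0 by rw [← mul_assoc, hmf0, zero_mul]]
      rw [show (f*(t*e)) * star m = f*((t*(e*star m))*e) by
        simp [mul_assoc, he, hsme, hsme2]]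
      simp [neg_mul, mul_neg, mul_assoc]
    -- stage 4 : kill m, by cases on k
    have hT21 : ∀ t : A, (f*(t*e)) * star m = 0 := by
      cases k with
      | zero =>
        intro t
        have hp : SAP.PP 0 m (f*(t*e)) e = 0 := by
          apply key1m _ _ m _ e hφm (Or.inl rfl)
          simp only [SAP.PP_zero_eq]
          rw [hbrX t, hbrY t]
          exact C8 _ _
        rw [SAP.PP_zero_eq] at hp
        rw [hbrM t] at hp
        -- hp : f*((-(t*(e*star m)))*e) = 0
        have hconv : (f*(t*e)) * star m = f*((t*(e*star m))*e) := by
          simp [mul_assoc, he, hsme, hsme2]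
        rw [hconv]
        have := congrArg (fun z => -z) hp
        simpa [neg_mul, mul_neg] using this
      | succ j =>
        -- iterate value lemma on A21 forms
        have FeIt : ∀ c : A, (fun w => starLie w e)^[j+1] (f*(c*e)) = f*(c*e) - star (f*(c*e)) := by
          intro c
          rw [Function.iterate_succ_apply]
          have hstep : starLie (f*(c*e)) e = f*(c*e) - star (f*(c*e)) := by
            simp [starLie, star_mul, mul_assoc, he, hse, hsf, hEE, hEF, hFE, hFF]
          have hfix : starLie (f*(c*e) - star (f*(c*e))) e = f*(c*e) - star (f*(c*e)) := by
            simp [starLie, star_sub, star_mul, star_star, mul_assoc, sub_mul, mul_sub,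
              he, hse, hsf, hff, hef, hfe, hEE, hEF, hFE, hFF]
            try abel
          rw [show (starLie (f*(c*e)) e) = f*(c*e) - star (f*(c*e)) from hstep]
          exact Function.iterate_fixed (f := fun w => starLie w e)
            (x := f*(c*e) - star (f*(c*e))) hfix j
        intro t
        have hp : SAP.PP (j+1) m (f*(t*e)) e = 0 := by
          apply key1m _ _ m _ e hφm (Or.inl rfl)
          have ev1 : SAP.PP (j+1) (e*(a*e)) (f*(t*e)) e
              = e*((star (t*(e*(star a*e))))*f) + f*((-(t*(e*(star a*e))))*e) := by
            show (fun w => starLie w e)^[j+1] (starLie (e*(a*e)) (f*(t*e))) = _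
            rw [hbrX t, FeIt]
            simp [star_mul, mul_assoc, hse, hsf, star_star]
            try abel
          have ev2 : SAP.PP (j+1) (e*(b*e)) (f*(t*e)) e
              = e*((star (t*(e*(star b*e))))*f) + f*((-(t*(e*(star b*e))))*e) := by
            show (fun w => starLie w e)^[j+1] (starLie (e*(b*e)) (f*(t*e))) = _
            rw [hbrY t, FeIt]
            simp [star_mul, mul_assoc, hse, hsf, star_star]
            try abel
          rw [ev1, ev2]
          exact COFF _ _ _ _
        have hp2 : (fun w => starLie w e)^[j+1] (starLie m (f*(t*e))) = 0 := hp
        rw [hbrM t, FeIt] at hp2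
        -- hp2 : f*(c*e) - star (f*(c*e)) = 0  with c = -(t*(e*star m))
        have hz : f*((-(t*(e*star m)))*e) = 0 := by
          have h7 := congrArg (fun w => f * w) hp2
          simp only [mul_sub, mul_zero] at h7
          rw [show f*(f*((-(t*(e*star m)))*e)) = f*((-(t*(e*star m)))*e) from hFF _] at h7
          rw [show f * star (f*((-(t*(e*star m)))*e)) = 0 from by
            simp [star_mul, mul_assoc, hse, hsf, hEE, hEF, hFE, hFF]] at h7
          simpa using h7
        have hconv : (f*(t*e)) * star m = f*((t*(e*star m))*e) := by
          simp [mul_assoc, he, hsme, hsme2]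
        rw [hconv]
        have := congrArg (fun z => -z) hz
        simpa [neg_mul, mul_neg] using this
    have hsm0 : star m = 0 := by
      apply hsp2
      intro Y
      simpa [mul_assoc, hsme] using hT21 Y
    rw [← star_star m, hsm0, star_zero]
  -- ============ C10 : pairs (A22, A22) ============
  have C10 : ∀ a b : A, φ (f*(a*f) + f*(b*f)) = φ (f*(a*f)) + φ (f*(b*f)) := by
    intro a b
    obtain ⟨S, hS⟩ := hsur (φ (f*(a*f)) + φ (f*(b*f)))
    have hφm : φ (f*(a*f) + f*(b*f) + (S - (f*(a*f) + f*(b*f)))) = φ (f*(a*f)) + φ (f*(b*f)) := by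
      rw [show f*(a*f) + f*(b*f) + (S - (f*(a*f) + f*(b*f))) = S by abel]; exact hS
    set m := S - (f*(a*f) + f*(b*f)) with hmdef
    suffices hm0 : m = 0 by
      rw [hm0, add_zero] at hφm; exact hφm
    have h1 : starLie m e = 0 := by
      apply brz e m hse
      apply key1m _ _ m e 1 hφm (Or.inr (Or.inr rfl))
      apply kn0l
      apply PPz
      simp [starLie, mul_assoc, star_mul, hse, hsf, he, hef, hfe, hff, hEE, hEF, hFE, hFF]
    have hme : m * e = e * star m := by rw [starLie] at h1; exact sub_eq_zero.mp h1
    have h12 : ∀ t : A, starLie (f*(t*e)) m = star (starLie (f*(t*e)) m) := by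
      intro t
      have hp : SAP.PP k (f*(t*e)) m 1 = 0 := by
        apply key2m _ _ m _ 1 hφm (Or.inr (Or.inr rfl))
        apply kn0l
        apply PPz
        simp [starLie, mul_assoc, star_mul, hse, hsf, he, hef, hfe, hff, hEE, hEF, hFE, hFF]
      exact SAP.F1_zero hp
    have hE : ∀ t : A, (f*(t*e)) * (m + star m) = (m + star m) * star (f*(t*e)) :=
      fun t => SAP.starLie_eq_star_imp (h12 t)
    have hL0 : ∀ t : A, (f*(t*e)) * (m + star m) = 0 := by
      intro t
      have h1' := hE t
      have h2' := hE (Complex.I • t)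
      have e1 : f*((Complex.I•t)*e) = Complex.I•(f*(t*e)) := by
        rw [smul_mul_assoc, mul_smul_comm]
      have e2 : star (Complex.I•(f*(t*e))) = (-Complex.I)•star (f*(t*e)) := by
        rw [star_smul, Complex.star_def, Complex.conj_I]
      rw [e1, e2, smul_mul_assoc, mul_smul_comm, ← h1'] at h2'
      rw [neg_smul] at h2'
      have h3 : Complex.I•((f*(t*e)) * (m + star m)) + Complex.I•((f*(t*e)) * (m + star m)) = 0 := by
        nth_rewrite 2 [h2']
        simp
      exact SAP.csmul_cancel _ Complex.I_ne_zero (SAP.add_self_zero h3)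
    have heh : e * (m + star m) = 0 := by
      apply hsp2
      intro Y
      simpa [mul_assoc] using hL0 Y
    have hesm : e * star m = -(e * m) := by
      have h4 := heh
      rw [mul_add, add_comm] at h4
      exact eq_neg_of_add_eq_zero_left h4
    have hme2 : m * e = -(e * m) := by rw [hme, hesm]
    have hem' : e * m = -(m * e) := by rw [hme2, neg_neg]
    have hme0 : m * e = 0 := by
      have w1 : e*(m*e) = m*e := by rw [hme, hEE, ← hme]
      have w2 : e*(m*e) = -(m*e) := by
        rw [← mul_assoc, hem', neg_mul, mul_assoc, he]
      have hx : m*e = -(m*e) := w1.symm.trans w2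
      have h5 : m*e + m*e = 0 := by nth_rewrite 2 [hx]; simp
      exact SAP.add_self_zero h5
    have hem0 : e * m = 0 := by rw [hem', hme0, neg_zero]
    have hfm1 : f * m = m := by
      have h6 : (e + f) * m = m := by rw [hef1, one_mul]
      rw [add_mul, hem0, zero_add] at h6; exact h6
    have hmf1 : m * f = m := by
      have h6 : m * (e + f) = m := by rw [hef1, mul_one]
      rw [mul_add, hme0, zero_add] at h6; exact h6
    have hsmf : f * star m = star m := by
      conv_rhs => rw [← hmf1, star_mul, hsf]
    have hsmf2 : star m * f = star m := by
      conv_rhs => rw [← hfm1, star_mul, hsf]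
    have hbrX : ∀ t : A, starLie (f*(a*f)) (e*(t*f)) = e*((-(t*(f*(star a*f))))*f) := by
      intro t
      simp [starLie, mul_assoc, star_mul, hse, hsf, he, hef, hfe, hff, hEE, hEF, hFE, hFF,
        neg_mul, mul_neg]
    have hbrY : ∀ t : A, starLie (f*(b*f)) (e*(t*f)) = e*((-(t*(f*(star b*f))))*f) := by
      intro t
      simp [starLie, mul_assoc, star_mul, hse, hsf, he, hef, hfe, hff, hEE, hEF, hFE, hFF,
        neg_mul, mul_neg]
    have hbrM : ∀ t : A, starLie m (e*(t*f)) = e*((-(t*(f*star m)))*f) := by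
      intro t
      rw [starLie]
      rw [show m * (e*(t*f)) = 0 by rw [← mul_assoc, hme0, zero_mul]]
      rw [show (e*(t*f)) * star m = e*((t*(f*star m))*f) by
        simp [mul_assoc, hff, hsmf, hsmf2]]
      simp [neg_mul, mul_neg, mul_assoc]
    have hT12 : ∀ t : A, (e*(t*f)) * star m = 0 := by
      cases k with
      | zero =>
        intro t
        have hp : SAP.PP 0 m (e*(t*f)) f = 0 := by
          apply key1m _ _ m _ f hφm (Or.inr (Or.inl rfl))
          simp only [SAP.PP_zero_eq]
          rw [hbrX t, hbrY t]
          exact C7 _ _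
        rw [SAP.PP_zero_eq] at hp
        rw [hbrM t] at hp
        have hconv : (e*(t*f)) * star m = e*((t*(f*star m))*f) := by
          simp [mul_assoc, hff, hsmf, hsmf2]
        rw [hconv]
        have := congrArg (fun z => -z) hp
        simpa [neg_mul, mul_neg] using this
      | succ j =>
        have FfIt : ∀ c : A, (fun w => starLie w f)^[j+1] (e*(c*f)) = e*(c*f) - star (e*(c*f)) := by
          intro c
          rw [Function.iterate_succ_apply]
          have hstep : starLie (e*(c*f)) f = e*(c*f) - star (e*(c*f)) := by
            simp [starLie, star_mul, mul_assoc, he, hse, hsf, hff, hEE, hEF, hFE, hFF]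
          have hfix : starLie (e*(c*f) - star (e*(c*f))) f = e*(c*f) - star (e*(c*f)) := by
            simp [starLie, star_sub, star_mul, star_star, mul_assoc, sub_mul, mul_sub,
              he, hse, hsf, hff, hef, hfe, hEE, hEF, hFE, hFF]
            try abel
          rw [show (starLie (e*(c*f)) f) = e*(c*f) - star (e*(c*f)) from hstep]
          exact Function.iterate_fixed (f := fun w => starLie w f)
            (x := e*(c*f) - star (e*(c*f))) hfix j
        intro t
        have hp : SAP.PP (j+1) m (e*(t*f)) f = 0 := by
          apply key1m _ _ m _ f hφm (Or.inr (Or.inl rfl))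
          have ev1 : SAP.PP (j+1) (f*(a*f)) (e*(t*f)) f
              = e*((-(t*(f*(star a*f))))*f) + f*((star (t*(f*(star a*f))))*e) := by
            show (fun w => starLie w f)^[j+1] (starLie (f*(a*f)) (e*(t*f))) = _
            rw [hbrX t, FfIt]
            simp [star_mul, mul_assoc, hse, hsf, star_star]
            try abel
          have ev2 : SAP.PP (j+1) (f*(b*f)) (e*(t*f)) f
              = e*((-(t*(f*(star b*f))))*f) + f*((star (t*(f*(star b*f))))*e) := by
            show (fun w => starLie w f)^[j+1] (starLie (f*(b*f)) (e*(t*f))) = _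
            rw [hbrY t, FfIt]
            simp [star_mul, mul_assoc, hse, hsf, star_star]
            try abel
          rw [ev1, ev2]
          exact COFF _ _ _ _
        have hp2 : (fun w => starLie w f)^[j+1] (starLie m (e*(t*f))) = 0 := hp
        rw [hbrM t, FfIt] at hp2
        have hz : e*((-(t*(f*star m)))*f) = 0 := by
          have h7 := congrArg (fun w => e * w) hp2
          simp only [mul_sub, mul_zero] at h7
          rw [show e*(e*((-(t*(f*star m)))*f)) = e*((-(t*(f*star m)))*f) from hEE _] at h7
          rw [show e * star (e*((-(t*(f*star m)))*f)) = 0 from by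
            simp [star_mul, mul_assoc, hse, hsf, hEE, hEF, hFE, hFF]] at h7
          simpa using h7
        have hconv : (e*(t*f)) * star m = e*((t*(f*star m))*f) := by
          simp [mul_assoc, hff, hsmf, hsmf2]
        rw [hconv]
        have := congrArg (fun z => -z) hz
        simpa [neg_mul, mul_neg] using this
    have hsm0 : star m = 0 := by
      apply hsp1
      intro Y
      simpa [mul_assoc, hsmf] using hT12 Y
    rw [← star_star m, hsm0, star_zero]
  -- ============ PCOLS/CCOLS : column pairs ============
  have PCOLS : ∀ u v : A, ∃ μ : A, star μ = μ ∧
      φ (u*e + v*f + μ) = φ (u*e) + φ (v*f) := by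
    intro u v
    obtain ⟨S, hS⟩ := hsur (φ (u*e) + φ (v*f))
    have hφm : φ (u*e + v*f + (S - (u*e + v*f))) = φ (u*e) + φ (v*f) := by
      rw [show u*e + v*f + (S - (u*e + v*f)) = S by abel]; exact hS
    refine ⟨S - (u*e + v*f), ?_, hφm⟩
    set m := S - (u*e + v*f) with hmdef
    have h1 : starLie m e = 0 := by
      apply brz e m hse
      apply key1m _ _ m e 1 hφm (Or.inr (Or.inr rfl))
      apply kn0r
      apply PPz
      simp [starLie, mul_assoc, star_mul, hse, hsf, he, hef, hfe, hff, hEE, hEF, hFE, hFF]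
    have h2 : starLie m f = 0 := by
      apply brz f m hsf
      apply key1m _ _ m f 1 hφm (Or.inr (Or.inr rfl))
      apply kn0l
      apply PPz
      simp [starLie, mul_assoc, star_mul, hse, hsf, he, hef, hfe, hff, hEE, hEF, hFE, hFF]
    have hme : m * e = e * star m := by rw [starLie] at h1; exact sub_eq_zero.mp h1
    have hmf : m * f = f * star m := by rw [starLie] at h2; exact sub_eq_zero.mp h2
    have h3 : m * e + m * f = e * star m + f * star m := by rw [hme, hmf]
    rw [← mul_add, ← add_mul, hef1, mul_one, one_mul] at h3
    exact h3.symm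
  have CCOLS : ∀ u v : A, φ (u*e + v*f) = φ (u*e) + φ (v*f) := by
    intro u v
    obtain ⟨μ, hμsa, hμ⟩ := PCOLS u v
    suffices h0 : μ = 0 by rw [h0, add_zero] at hμ; exact hμ
    cases k with
    | zero =>
      obtain ⟨μ', hsa', hp'⟩ := PCOLS (Complex.I•u + Complex.I•u) (Complex.I•v + Complex.I•v)
      have hX2 : (Complex.I•u + Complex.I•u)*e = Complex.I•(u*e) + Complex.I•(u*e) := by
        simp [add_mul, smul_mul_assoc]
      have hY2 : (Complex.I•v + Complex.I•v)*f = Complex.I•(v*f) + Complex.I•(v*f) := by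
        simp [add_mul, smul_mul_assoc]
      rw [hX2, hY2] at hp'
      have hraw := rel2φ (u*e + v*f + μ) (u*e) (v*f) (Complex.I•(1:A)) 1 hμ
        (Or.inr (Or.inr rfl))
      rw [SAP.PP_zero_eq, SAP.PP_zero_eq, SAP.PP_zero_eq, SAP.starLie_I1, SAP.starLie_I1,
        SAP.starLie_I1] at hraw
      rw [show Complex.I•(u*e + v*f + μ) + Complex.I•(u*e + v*f + μ)
          = (Complex.I•(u*e) + Complex.I•(u*e))
            + (Complex.I•(v*f) + Complex.I•(v*f)) + (Complex.I•μ + Complex.I•μ) by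
        simp only [smul_add]; abel] at hraw
      rw [← hp'] at hraw
      have h5 := hinj hraw
      have hμ2 : Complex.I•μ + Complex.I•μ = μ' := add_left_cancel h5
      apply SAP.I_sa_zero hμsa
      rw [hμ2]; exact hsa'
    | succ j =>
      have hraw := rel2φ (u*e + v*f + μ) (u*e) (v*f) (Complex.I•(1:A)) 1 hμ
        (Or.inr (Or.inr rfl))
      rw [SAP.PP_I1_succ, SAP.PP_I1_succ, SAP.PP_I1_succ] at hraw
      rw [show (2^(j+1):ℕ) • (Complex.I•((u*e + v*f + μ) + star (u*e + v*f + μ)))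
          = 2^(j+1) • (Complex.I•(u*e + star (u*e)))
            + 2^(j+1) • (Complex.I•(v*f + star (v*f)))
            + 2^(j+1) • (Complex.I•(μ + star μ)) by
        simp only [star_add, smul_add]; abel] at hraw
      have hkn : φ ((2^(j+1):ℕ) • (Complex.I•(u*e + star (u*e)))
            + (2^(j+1):ℕ) • (Complex.I•(v*f + star (v*f))))
          = φ ((2^(j+1):ℕ) • (Complex.I•(u*e + star (u*e))))
            + φ ((2^(j+1):ℕ) • (Complex.I•(v*f + star (v*f)))) := by
        have e1 : Complex.I•(u*e + star (u*e))
            = (Complex.I•(u*e) + Complex.I•(v*f)) * e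
              - e * star (Complex.I•(u*e) + Complex.I•(v*f)) := by
          simp [star_mul, star_star, star_add, star_smul, Complex.star_def, Complex.conj_I,
            smul_mul_assoc, mul_smul_comm, smul_add, neg_smul, sub_neg_eq_add, mul_assoc,
            he, hff, hef, hfe, hEE, hEF, hFE, hFF, hse, hsf, add_mul, mul_add, mul_neg,
            neg_mul, neg_neg]
          try abel
        have e2 : Complex.I•(v*f + star (v*f))
            = (Complex.I•(u*e) + Complex.I•(v*f)) * f
              - f * star (Complex.I•(u*e) + Complex.I•(v*f)) := by
          simp [star_mul, star_star, star_add, star_smul, Complex.star_def, Complex.conj_I,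
            smul_mul_assoc, mul_smul_comm, smul_add, neg_smul, sub_neg_eq_add, mul_assoc,
            he, hff, hef, hfe, hEE, hEF, hFE, hFF, hse, hsf, add_mul, mul_add, mul_neg,
            neg_mul, neg_neg]
          try abel
        rw [e1, e2]
        exact SPLIT _
      have h6 := hraw.trans hkn.symm
      have h7 := hinj h6
      have hW : (2^(j+1):ℕ) • (Complex.I•(μ + star μ)) = 0 := add_eq_left.mp h7
      exact SAP.I_sa_zero' hμsa j hW
  -- ============ assembly ============
  have DEC : ∀ c : A, φ c = φ (e*(c*e)) + φ (f*(c*e)) + (φ (f*(c*f)) + φ (e*(c*f))) := by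
    intro c
    have h1 : c = c*e + c*f := by rw [← mul_add, hef1, mul_one]
    have h2 : c*e = e*(c*e) + f*(c*e) := by rw [← add_mul, hef1, one_mul]
    have h3 : c*f = f*(c*f) + e*(c*f) := by
      rw [← add_mul, add_comm f e, hef1, one_mul]
    calc φ c = φ (c*e + c*f) := by rw [← h1]
    _ = φ (c*e) + φ (c*f) := CCOLS c c
    _ = φ (e*(c*e) + f*(c*e)) + φ (f*(c*f) + e*(c*f)) := by rw [← h2, ← h3]
    _ = (φ (e*(c*e)) + φ (f*(c*e))) + (φ (f*(c*f)) + φ (e*(c*f))) := by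
        rw [C3 c c, C4 c c]
  have ADD : ∀ x y : A, φ (x + y) = φ x + φ y := by
    intro x y
    rw [DEC (x + y), DEC x, DEC y]
    have c11 : e*((x+y)*e) = e*(x*e) + e*(y*e) := by rw [add_mul, mul_add]
    have c21 : f*((x+y)*e) = f*(x*e) + f*(y*e) := by rw [add_mul, mul_add]
    have c22 : f*((x+y)*f) = f*(x*f) + f*(y*f) := by rw [add_mul, mul_add]
    have c12 : e*((x+y)*f) = e*(x*f) + e*(y*f) := by rw [add_mul, mul_add]
    rw [c11, c21, c22, c12, C9 x y, C8 x y, C10 x y, C7 x y]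
    abel
  have hneg : ∀ x : A, φ (-x) = -φ x := by
    intro x
    have h := ADD x (-x)
    rw [add_neg_cancel, hzero] at h
    exact eq_neg_of_add_eq_zero_right h.symm
  have hsmuln : ∀ (n : ℕ) (x : A), φ (n • x) = n • φ x := by
    intro n
    induction n with
    | zero => intro x; simp [hzero]
    | succ p ih => intro x; rw [succ_nsmul, succ_nsmul, ADD, ih]
  have hstar : ∀ a : A, φ (star a) = star (φ a) := by
    intro a
    have h := hrel a 1 1 (Or.inr (Or.inr rfl))
    rw [hone] at h
    rw [vb a 1 (star_one A), mul_one, one_mul] at h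
    rw [SAP.PP_sa_one k (φ a) 1 (star_one A'), mul_one, one_mul] at h
    rw [hsmuln] at h
    have h2 : φ (a - star a) = φ a - φ (star a) := by
      rw [sub_eq_add_neg, ADD, hneg, ← sub_eq_add_neg]
    rw [h2] at h
    have h3 : (2^k:ℕ) • ((φ a - φ (star a)) - (φ a - star (φ a))) = 0 := by
      rw [smul_sub, h, sub_self]
    have h4 := SAP.nsmul_cancel k h3
    rw [sub_eq_zero, sub_right_inj] at h4
    exact h4
  exact ⟨ADD, hstar⟩

end Main


variable {A A' : Type*}
  [NormedRing A] [StarRing A] [CStarRing A] [NormedAlgebra ℂ A]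
  [CompleteSpace A] [StarModule ℂ A]
  [NormedRing A'] [StarRing A'] [CStarRing A'] [NormedAlgebra ℂ A']
  [CompleteSpace A'] [StarModule ℂ A']

theorem stmt0
    (P₁ : A) (hP₁proj : P₁ * P₁ = P₁) (hP₁star : star P₁ = P₁)
    (hP₁ne0 : P₁ ≠ 0) (hP₁ne1 : P₁ ≠ 1)
    (P₂ : A) (hP₂ : P₂ = 1 - P₁)
    (hspade : ∀ Pj ∈ ({P₁, P₂} : Set A), ∀ X : A, (∀ Y : A, Pj * Y * X = 0) → X = 0)
    (n : ℕ) (hn : 2 ≤ n)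
    (φ : A → A') (hbij : Function.Bijective φ) (hunit : φ 1 = 1)
    (hbullet : ∀ a b : A, ∀ Ξ ∈ ({P₁, P₂, 1} : Set A),
      φ (pn n a b Ξ) = pn n (φ a) (φ b) (φ Ξ))
    :
    (∀ a b : A, φ (a + b) = φ a + φ b) ∧ (∀ a : A, φ (star a) = star (φ a)) := by
  subst hP₂
  apply main_additivity (n - 2) φ P₁ hP₁proj hP₁star hbij.1 hbij.2 hunit
  · intro a b ξ hξ
    have hmem : ξ ∈ ({P₁, 1 - P₁, 1} : Set A) := by
      rcases hξ with h | h | h <;> simp [h]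
    exact hbullet a b ξ hmem
  · exact hspade P₁ (by simp)
  · exact hspade (1 - P₁) (by simp)
end

section
/- Let A and A' be unital C*-algebras, P₁ a nontrivial symmetric projection in A, P₂ = I_A − P₁, A_{jk} = P_j A P_k, and suppose A satisfies (♠): for j ∈ {1,2}, P_j A X = {0} implies X = 0. Fix an integer n ≥ 2 and let φ: A → A' be a bijective map with φ(I_A) = I_{A'} satisfying (•): φ(p_{n*}(A,B,Ξ,…,Ξ)) = p_{n*}(φ(A),φ(B),φ(Ξ),…,φ(Ξ)) for all A, B ∈ A and Ξ ∈ {P₁, P₂, I_A}. Then for any A₁₁ ∈ A₁₁ and B₂₂ ∈ A₂₂ one has φ(A₁₁ + B₂₂) = φ(A₁₁) + φ(B₂₂). -/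
section generic
variable {R : Type*} [Ring R] [StarRing R]

lemma starLie_add_left (a a' b : R) : starLie (a + a') b = starLie a b + starLie a' b := by
  simp only [starLie, add_mul, mul_add, star_add]; abel

lemma starLie_add_right (a b b' : R) : starLie a (b + b') = starLie a b + starLie a b' := by
  simp only [starLie, add_mul, mul_add]; abel

lemma iterF_add (ξ : R) (k : ℕ) (z z' : R) :
    (fun z => starLie z ξ)^[k] (z + z') =
      (fun z => starLie z ξ)^[k] z + (fun z => starLie z ξ)^[k] z' := by
  induction k generalizing z z' with
  | zero => simp
  | succ m ih =>
    rw [Function.iterate_succ_apply, Function.iterate_succ_apply,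
      Function.iterate_succ_apply]
    rw [starLie_add_left]
    exact ih _ _

lemma starLie_zero_left (b : R) : starLie (0 : R) b = 0 := by simp [starLie]

lemma iterF_zero (ξ : R) (k : ℕ) : (fun z => starLie z ξ)^[k] (0 : R) = 0 := by
  induction k with
  | zero => simp
  | succ m ih => rw [Function.iterate_succ_apply]; simpa [starLie_zero_left] using ih

lemma pn_add_left (n : ℕ) (a a' b ξ : R) :
    pn n (a + a') b ξ = pn n a b ξ + pn n a' b ξ := by
  unfold pn; rw [starLie_add_left, iterF_add]

lemma pn_add_right (n : ℕ) (a b b' ξ : R) :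
    pn n a (b + b') ξ = pn n a b ξ + pn n a b' ξ := by
  unfold pn; rw [starLie_add_right, iterF_add]

lemma pn_of_starLie_eq_zero (n : ℕ) (a b ξ : R) (h : starLie a b = 0) :
    pn n a b ξ = 0 := by
  unfold pn; rw [h, iterF_zero]

lemma pn_sub_right (n : ℕ) (a b b' ξ : R) :
    pn n a (b - b') ξ = pn n a b ξ - pn n a b' ξ := by
  have := pn_add_right n a (b - b') b' ξ
  rw [sub_add_cancel] at this
  rw [this]; abel

lemma pn_one_one_one (n : ℕ) : pn n (1 : R) 1 1 = 0 := by
  apply pn_of_starLie_eq_zero; simp [starLie]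

lemma offdiag_iter (P Q : R) (hQQ : Q * Q = Q) (hPQ : P * Q = 0) (k : ℕ) (z : R) :
    P * (fun z => starLie z Q)^[k] z * Q = P * z * Q := by
  induction k generalizing z with
  | zero => simp
  | succ m ih =>
    rw [Function.iterate_succ_apply']
    have h1 : ∀ w : R, P * starLie w Q * Q = P * w * Q := by
      intro w
      simp only [starLie, mul_sub, sub_mul, mul_assoc, hQQ]
      rw [← mul_assoc P Q, hPQ, zero_mul, sub_zero]
    rw [h1, ih]
end generic

section generic2
variable {R : Type*} [Ring R] [StarRing R] [Module ℂ R]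

omit [Module ℂ R] in
lemma pn_sub_left {n : ℕ} (a a' b ξ : R) :
    pn n (a - a') b ξ = pn n a b ξ - pn n a' b ξ := by
  have := pn_add_left n (a - a') a' b ξ
  rw [sub_add_cancel] at this
  rw [this]; abel

omit [StarRing R] in
lemma self_add_self_eq_zero {z : R} (h : z + z = 0) : z = 0 := by
  have h2 : (2 : ℂ) • z = 0 := by rw [two_smul]; exact h
  rcases smul_eq_zero.mp h2 with hc | hz
  · exact absurd hc two_ne_zero
  · exact hz

lemma diag_iter (P : R) (hPstar : star P = P)
    (k : ℕ) (w : R) (hw1 : w * P = w) (hw2 : P * w = w)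
    (h : (fun z => starLie z P)^[k] w = 0) : w = star w := by
  cases k with
  | zero =>
    simp only [Function.iterate_zero, id_eq] at h
    rw [h]; simp
  | succ m =>
    have hswP : star w * P = star w := by
      have := congrArg star hw2; rwa [star_mul, hPstar] at this
    have hPsw : P * star w = star w := by
      have := congrArg star hw1; rwa [star_mul, hPstar] at this
    set Z := w - star w with hZ
    have hstarZ : star Z = -Z := by rw [hZ, star_sub, star_star, neg_sub]
    have hFw : starLie w P = Z := by
      rw [show starLie w P = w * P - P * star w from rfl, hw1, hPsw]
    have hZP : Z * P = Z := by rw [hZ, sub_mul, hw1, hswP]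
    have hPZ : P * Z = Z := by rw [hZ, mul_sub, hw2, hPsw]
    have hFZ : starLie Z P = Z + Z := by
      rw [show starLie Z P = Z * P - P * star Z from rfl, hZP, hstarZ, mul_neg, hPZ,
        sub_neg_eq_add]
    have key : ∀ j : ℕ, (fun z => starLie z P)^[j] Z = (2 ^ j : ℕ) • Z := by
      intro j
      induction j with
      | zero => simp
      | succ i ih =>
        rw [Function.iterate_succ_apply]
        rw [hFZ, iterF_add, ih, ← add_nsmul]
        congr 1
        ring
    rw [Function.iterate_succ_apply] at h
    rw [hFw, key] at h
    have h2 : ((2 ^ m : ℕ) : ℂ) • Z = 0 := by rw [Nat.cast_smul_eq_nsmul]; exact h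
    have hZ0 : Z = 0 := by
      rcases smul_eq_zero.mp h2 with hc | hz
      · exact absurd hc (Nat.cast_ne_zero.mpr (by positivity))
      · exact hz
    exact sub_eq_zero.mp hZ0

end generic2

section comp
variable {R : Type*} [Ring R] [StarRing R] [Module ℂ R] [StarModule ℂ R]
  [SMulCommClass ℂ R R] [IsScalarTower ℂ R R]

omit [Module ℂ R] [StarModule ℂ R] [SMulCommClass ℂ R R] [IsScalarTower ℂ R R] in
lemma comp_offdiag (P Q D : R) (hPP : P*P = P) (hPstar : star P = P)
    (hQQ : Q*Q = Q) (hPQ : P*Q = 0)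
    (hspadeP : ∀ X : R, (∀ Y : R, P*Y*X = 0) → X = 0) (k : ℕ)
    (h : ∀ Y : R, (fun z => starLie z Q)^[k] (starLie (P*Y*P) D) = 0) :
    P*D*Q = 0 := by
  apply hspadeP
  intro Y
  have hstarX : star (P*Y*P) = P * star Y * P := by
    rw [star_mul, star_mul, hPstar, ← mul_assoc]
  have h0 := congrArg (fun z => P * z * Q) (h Y)
  simp only [mul_zero, zero_mul] at h0
  rw [offdiag_iter P Q hQQ hPQ] at h0
  have key : P * (starLie (P*Y*P) D) * Q = P*Y*(P*D*Q) := by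
    simp only [starLie]
    rw [hstarX]
    simp only [mul_sub, sub_mul, mul_assoc, hPQ, mul_zero, sub_zero]
    rw [← mul_assoc P P, hPP]
  rw [key] at h0
  exact h0

lemma comp_diag (P D : R) (hPP : P*P = P) (hPstar : star P = P)
    (hspadeP : ∀ X : R, (∀ Y : R, P*Y*X = 0) → X = 0)
    (hPD : P*D = P*D*P) (hDP : D*P = P*D*P) (k : ℕ)
    (h1 : ∀ Y : R, (fun z => starLie z P)^[k] (starLie (P*Y*P) D) = 0)
    (h2 : ∀ Y : R, (fun z => starLie z P)^[k] (starLie D (P*Y*P)) = 0) :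
    P*D*P = 0 := by
  have hDPc : D*P = P*D := by rw [hDP, ← hPD]
  have hPsD : P * star D = star D * P := by
    have := congrArg star hDPc
    rwa [star_mul, star_mul, hPstar] at this
  have hsDPc : star D * P = P * star D := hPsD.symm
  have hstarX : ∀ Y : R, star (P*Y*P) = P * star Y * P := fun Y => by
    rw [star_mul, star_mul, hPstar, ← mul_assoc]
  have hXP : ∀ Y : R, (P*Y*P)*P = P*Y*P := fun Y => by rw [mul_assoc (P*Y) P P, hPP]
  have hPX : ∀ Y : R, P*(P*Y*P) = P*Y*P := fun Y => by
    rw [← mul_assoc, ← mul_assoc, hPP]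
  have l1 : ∀ Y : R, ((P*Y*P)*D)*P = (P*Y*P)*D := fun Y => by
    rw [mul_assoc, hDPc, ← mul_assoc, hXP]
  have l2 : ∀ Y : R, P*((P*Y*P)*D) = (P*Y*P)*D := fun Y => by
    rw [← mul_assoc, hPX]
  have l3 : ∀ Y : R, (D*(P*Y*P))*P = D*(P*Y*P) := fun Y => by
    rw [mul_assoc, hXP]
  have l4 : ∀ Y : R, P*(D*(P*Y*P)) = D*(P*Y*P) := fun Y => by
    rw [← mul_assoc, ← hDPc, mul_assoc, hPX]
  have l5 : ∀ Y : R, ((P*Y*P)*star D)*P = (P*Y*P)*star D := fun Y => by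
    rw [mul_assoc, hsDPc, ← mul_assoc, hXP]
  have l6 : ∀ Y : R, P*((P*Y*P)*star D) = (P*Y*P)*star D := fun Y => by
    rw [← mul_assoc, hPX]
  -- Step B : from h2
  have w2eq : ∀ Y : R, starLie D (P*Y*P) = star (starLie D (P*Y*P)) := by
    intro Y
    refine diag_iter P hPstar k _ ?_ ?_ (h2 Y)
    · simp only [starLie]; rw [sub_mul, l3 Y, l5 Y]
    · simp only [starLie]; rw [mul_sub, l4 Y, l6 Y]
  have w2zero : ∀ Y : R, starLie D (P*Y*P) = 0 := by
    intro Y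
    have e2 := w2eq (Complex.I • Y)
    have hsm : starLie D (P*(Complex.I • Y)*P) = Complex.I • starLie D (P*Y*P) := by
      simp only [starLie, mul_smul_comm, smul_mul_assoc, smul_sub]
    rw [hsm, star_smul] at e2
    simp only [Complex.star_def, Complex.conj_I, neg_smul] at e2
    rw [← w2eq Y] at e2
    have h0 : Complex.I • starLie D (P*Y*P) + Complex.I • starLie D (P*Y*P) = 0 := by
      nth_rewrite 2 [e2]
      exact add_neg_cancel _
    rw [← smul_add] at h0
    have h1' := (smul_eq_zero.mp h0).resolve_left Complex.I_ne_zero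
    exact self_add_self_eq_zero h1'
  have hPsDP : P*star D*P = P*star D := by
    rw [mul_assoc, hsDPc, ← mul_assoc, hPP]
  have eqB : P*D*P = P*star D*P := by
    have h0 := w2zero 1
    rw [mul_one, hPP] at h0
    simp only [starLie] at h0
    have hDPsD : D*P = P*star D := sub_eq_zero.mp h0
    rw [← hDP, hDPsD, hPsDP]
  -- Step A : from h1
  have wAeq : ∀ Y : R, starLie (P*Y*P) D = star (starLie (P*Y*P) D) := by
    intro Y
    refine diag_iter P hPstar k _ ?_ ?_ (h1 Y)
    · simp only [starLie, hstarX]; rw [sub_mul, l1 Y, l3 (star Y)]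
    · simp only [starLie, hstarX]; rw [mul_sub, l2 Y, l4 (star Y)]
  have wplus : ∀ Y : R, (P*Y*P)*D + (P*Y*P)*star D = 0 := by
    intro Y
    have e1 := wAeq Y
    simp only [starLie, star_sub, star_mul, star_star, hstarX] at e1
    -- e1 : (P*Y*P)*D - D*(P*star Y*P) = star D*(P*star Y*P) - (P*Y*P)*star D
    have e2 := wAeq (Complex.I • Y)
    have hsm : starLie (P*(Complex.I • Y)*P) D
        = Complex.I • ((P*Y*P)*D + D*(P*star Y*P)) := by
      simp only [starLie, hstarX, star_smul, Complex.star_def, Complex.conj_I,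
        neg_smul, mul_neg, neg_mul, mul_smul_comm, smul_mul_assoc, smul_add,
        sub_neg_eq_add]
    rw [hsm, star_smul] at e2
    simp only [Complex.star_def, Complex.conj_I, neg_smul, star_add, star_mul,
      star_star, hstarX] at e2
    -- e2 : I • u = -(I • (star D*(P*star Y*P) + (P*Y*P)*star D))
    rw [← smul_neg] at e2
    have E2 := smul_right_injective R Complex.I_ne_zero e2
    -- E2 : (P*Y*P)*D + D*(P*star Y*P) = -(star D*(P*star Y*P) + (P*Y*P)*star D)
    have g : ((P*Y*P)*D + (P*Y*P)*star D) + ((P*Y*P)*D + (P*Y*P)*star D)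
        = (((P*Y*P)*D - D*(P*star Y*P)) - (star D*(P*star Y*P) - (P*Y*P)*star D))
          + (((P*Y*P)*D + D*(P*star Y*P))
              - (-(star D*(P*star Y*P) + (P*Y*P)*star D))) := by abel
    rw [e1, E2, sub_self, sub_self, add_zero] at g
    exact self_add_self_eq_zero g
  have hA : P*(D + star D)*P = 0 := by
    apply hspadeP
    intro Y
    have hw := wplus Y
    have hid : P*Y*(P*(D + star D)*P) = ((P*Y*P)*D + (P*Y*P)*star D)*P := by
      noncomm_ring
    rw [hid, hw, zero_mul]
  have hexp : P*(D + star D)*P = P*D*P + P*star D*P := by noncomm_ring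
  rw [hexp, ← eqB] at hA
  exact self_add_self_eq_zero hA

end comp


variable {A A' : Type*}
  [NormedRing A] [StarRing A] [CStarRing A] [NormedAlgebra ℂ A]
  [CompleteSpace A] [StarModule ℂ A]
  [NormedRing A'] [StarRing A'] [CStarRing A'] [NormedAlgebra ℂ A']
  [CompleteSpace A'] [StarModule ℂ A']

theorem stmt4
    (P₁ : A) (hP₁proj : P₁ * P₁ = P₁) (hP₁star : star P₁ = P₁)
    (hP₁ne0 : P₁ ≠ 0) (hP₁ne1 : P₁ ≠ 1)
    (P₂ : A) (hP₂ : P₂ = 1 - P₁)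
    (hspade : ∀ Pj ∈ ({P₁, P₂} : Set A), ∀ X : A, (∀ Y : A, Pj * Y * X = 0) → X = 0)
    (n : ℕ) (hn : 2 ≤ n)
    (φ : A → A') (hbij : Function.Bijective φ) (hunit : φ 1 = 1)
    (hbullet : ∀ a b : A, ∀ Ξ ∈ ({P₁, P₂, 1} : Set A),
      φ (pn n a b Ξ) = pn n (φ a) (φ b) (φ Ξ))
    :
    ∀ a b : A, (∃ x : A, a = P₁ * x * P₁) → (∃ y : A, b = P₂ * y * P₂) →
      φ (a + b) = φ a + φ b := by
  intro a b ha hb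
  obtain ⟨x, hx⟩ := ha
  obtain ⟨y, hy⟩ := hb
  have hP₂proj : P₂ * P₂ = P₂ := by
    rw [hP₂]
    simp only [sub_mul, mul_sub, one_mul, mul_one, hP₁proj]
    abel
  have hP₂star : star P₂ = P₂ := by rw [hP₂, star_sub, star_one, hP₁star]
  have h12 : P₁ * P₂ = 0 := by rw [hP₂, mul_sub, mul_one, hP₁proj, sub_self]
  have h21 : P₂ * P₁ = 0 := by rw [hP₂, sub_mul, one_mul, hP₁proj, sub_self]
  have hsum : P₁ + P₂ = 1 := by rw [hP₂]; abel
  have mm1 : P₁ ∈ ({P₁, P₂, 1} : Set A) := by simp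
  have mm2 : P₂ ∈ ({P₁, P₂, 1} : Set A) := by simp
  have spade1 : ∀ X : A, (∀ Y : A, P₁ * Y * X = 0) → X = 0 := hspade P₁ (by simp)
  have spade2 : ∀ X : A, (∀ Y : A, P₂ * Y * X = 0) → X = 0 := hspade P₂ (by simp)
  have hinj := hbij.1
  have hphi0 : φ 0 = 0 := by
    have h := hbullet 1 1 1 (by simp)
    rw [pn_one_one_one, hunit, pn_one_one_one] at h
    exact h
  obtain ⟨T, hT⟩ := hbij.2 (φ a + φ b)
  have key2 : ∀ X : A, ∀ Ξ ∈ ({P₁, P₂, 1} : Set A),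
      (starLie X a = 0 ∨ starLie X b = 0) → pn n X (T - (a + b)) Ξ = 0 := by
    intro X Ξ hΞ hor
    have hmain : φ (pn n X T Ξ) = φ (pn n X (a + b) Ξ) := by
      rw [hbullet X T Ξ hΞ, hT]
      rcases hor with h0 | h0
      · have hz : pn n X a Ξ = 0 := pn_of_starLie_eq_zero n X a Ξ h0
        calc pn n (φ X) (φ a + φ b) (φ Ξ)
            = pn n (φ X) (φ a) (φ Ξ) + pn n (φ X) (φ b) (φ Ξ) :=
              pn_add_right n (φ X) (φ a) (φ b) (φ Ξ)
          _ = φ (pn n X a Ξ) + φ (pn n X b Ξ) := by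
              rw [← hbullet X a Ξ hΞ, ← hbullet X b Ξ hΞ]
          _ = φ (pn n X b Ξ) := by rw [hz, hphi0, zero_add]
          _ = φ (pn n X (a + b) Ξ) := by rw [pn_add_right, hz, zero_add]
      · have hz : pn n X b Ξ = 0 := pn_of_starLie_eq_zero n X b Ξ h0
        calc pn n (φ X) (φ a + φ b) (φ Ξ)
            = pn n (φ X) (φ a) (φ Ξ) + pn n (φ X) (φ b) (φ Ξ) :=
              pn_add_right n (φ X) (φ a) (φ b) (φ Ξ)
          _ = φ (pn n X a Ξ) + φ (pn n X b Ξ) := by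
              rw [← hbullet X a Ξ hΞ, ← hbullet X b Ξ hΞ]
          _ = φ (pn n X a Ξ) := by rw [hz, hphi0, add_zero]
          _ = φ (pn n X (a + b) Ξ) := by rw [pn_add_right, hz, add_zero]
    have heq := hinj hmain
    rw [pn_sub_right, heq, sub_self]
  have key1 : ∀ c : A, ∀ Ξ ∈ ({P₁, P₂, 1} : Set A),
      (starLie a c = 0 ∨ starLie b c = 0) → pn n (T - (a + b)) c Ξ = 0 := by
    intro c Ξ hΞ hor
    have hmain : φ (pn n T c Ξ) = φ (pn n (a + b) c Ξ) := by
      rw [hbullet T c Ξ hΞ, hT]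
      rcases hor with h0 | h0
      · have hz : pn n a c Ξ = 0 := pn_of_starLie_eq_zero n a c Ξ h0
        calc pn n (φ a + φ b) (φ c) (φ Ξ)
            = pn n (φ a) (φ c) (φ Ξ) + pn n (φ b) (φ c) (φ Ξ) :=
              pn_add_left n (φ a) (φ b) (φ c) (φ Ξ)
          _ = φ (pn n a c Ξ) + φ (pn n b c Ξ) := by
              rw [← hbullet a c Ξ hΞ, ← hbullet b c Ξ hΞ]
          _ = φ (pn n b c Ξ) := by rw [hz, hphi0, zero_add]
          _ = φ (pn n (a + b) c Ξ) := by rw [pn_add_left, hz, zero_add]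
      · have hz : pn n b c Ξ = 0 := pn_of_starLie_eq_zero n b c Ξ h0
        calc pn n (φ a + φ b) (φ c) (φ Ξ)
            = pn n (φ a) (φ c) (φ Ξ) + pn n (φ b) (φ c) (φ Ξ) :=
              pn_add_left n (φ a) (φ b) (φ c) (φ Ξ)
          _ = φ (pn n a c Ξ) + φ (pn n b c Ξ) := by
              rw [← hbullet a c Ξ hΞ, ← hbullet b c Ξ hΞ]
          _ = φ (pn n a c Ξ) := by rw [hz, hphi0, add_zero]
          _ = φ (pn n (a + b) c Ξ) := by rw [pn_add_left, hz, add_zero]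
    have heq := hinj hmain
    rw [pn_sub_left, heq, sub_self]
  -- orthogonality killer
  have orth : ∀ (P Q : A), P * Q = 0 → Q * P = 0 → star P = P →
      ∀ u v : A, starLie (P * u * P) (Q * v * Q) = 0 := by
    intro P Q hPQ hQP hsP u v
    have hstar : star (P * u * P) = P * star u * P := by
      rw [star_mul, star_mul, hsP, ← mul_assoc]
    have e1 : ∀ z : A, P * (Q * z) = 0 := fun z => by rw [← mul_assoc, hPQ, zero_mul]
    have e2 : ∀ z : A, Q * (P * z) = 0 := fun z => by rw [← mul_assoc, hQP, zero_mul]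
    simp only [starLie, hstar]
    simp only [mul_assoc, e1, e2, mul_zero, sub_zero, sub_self]
  have kb2 : ∀ Y : A, starLie (P₁ * Y * P₁) b = 0 := fun Y => by
    rw [hy]; exact orth P₁ P₂ h12 h21 hP₁star Y y
  have ka2 : ∀ Y : A, starLie (P₂ * Y * P₂) a = 0 := fun Y => by
    rw [hx]; exact orth P₂ P₁ h21 h12 hP₂star Y x
  have kb1 : ∀ Y : A, starLie b (P₁ * Y * P₁) = 0 := fun Y => by
    rw [hy]; exact orth P₂ P₁ h21 h12 hP₂star y Y
  have ka1 : ∀ Y : A, starLie a (P₂ * Y * P₂) = 0 := fun Y => by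
    rw [hx]; exact orth P₁ P₂ h12 h21 hP₁star x Y
  -- off-diagonal components of D := T - (a+b)
  have hD12 : P₁ * (T - (a + b)) * P₂ = 0 := by
    apply comp_offdiag P₁ P₂ (T - (a + b)) hP₁proj hP₁star hP₂proj h12 spade1 (n - 2)
    intro Y
    exact key2 (P₁ * Y * P₁) P₂ mm2 (Or.inr (kb2 Y))
  have hD21 : P₂ * (T - (a + b)) * P₁ = 0 := by
    apply comp_offdiag P₂ P₁ (T - (a + b)) hP₂proj hP₂star hP₁proj h21 spade2 (n - 2)
    intro Y
    exact key2 (P₂ * Y * P₂) P₁ mm1 (Or.inl (ka2 Y))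
  -- corner relations
  have hPD1 : P₁ * (T - (a + b)) = P₁ * (T - (a + b)) * P₁ := by
    calc P₁ * (T - (a + b)) = P₁ * (T - (a + b)) * (P₁ + P₂) := by rw [hsum, mul_one]
      _ = P₁ * (T - (a + b)) * P₁ + P₁ * (T - (a + b)) * P₂ := by rw [mul_add]
      _ = P₁ * (T - (a + b)) * P₁ := by rw [hD12, add_zero]
  have hDP1 : (T - (a + b)) * P₁ = P₁ * (T - (a + b)) * P₁ := by
    calc (T - (a + b)) * P₁ = (P₁ + P₂) * (T - (a + b)) * P₁ := by rw [hsum, one_mul]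
      _ = P₁ * (T - (a + b)) * P₁ + P₂ * (T - (a + b)) * P₁ := by rw [add_mul, add_mul]
      _ = P₁ * (T - (a + b)) * P₁ := by rw [hD21, add_zero]
  have hPD2 : P₂ * (T - (a + b)) = P₂ * (T - (a + b)) * P₂ := by
    calc P₂ * (T - (a + b)) = P₂ * (T - (a + b)) * (P₁ + P₂) := by rw [hsum, mul_one]
      _ = P₂ * (T - (a + b)) * P₁ + P₂ * (T - (a + b)) * P₂ := by rw [mul_add]
      _ = P₂ * (T - (a + b)) * P₂ := by rw [hD21, zero_add]
  have hDP2 : (T - (a + b)) * P₂ = P₂ * (T - (a + b)) * P₂ := by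
    calc (T - (a + b)) * P₂ = (P₁ + P₂) * (T - (a + b)) * P₂ := by rw [hsum, one_mul]
      _ = P₁ * (T - (a + b)) * P₂ + P₂ * (T - (a + b)) * P₂ := by rw [add_mul, add_mul]
      _ = P₂ * (T - (a + b)) * P₂ := by rw [hD12, zero_add]
  have hD11 : P₁ * (T - (a + b)) * P₁ = 0 := by
    apply comp_diag P₁ (T - (a + b)) hP₁proj hP₁star spade1 hPD1 hDP1 (n - 2)
    · intro Y; exact key2 (P₁ * Y * P₁) P₁ mm1 (Or.inr (kb2 Y))
    · intro Y; exact key1 (P₁ * Y * P₁) P₁ mm1 (Or.inr (kb1 Y))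
  have hD22 : P₂ * (T - (a + b)) * P₂ = 0 := by
    apply comp_diag P₂ (T - (a + b)) hP₂proj hP₂star spade2 hPD2 hDP2 (n - 2)
    · intro Y; exact key2 (P₂ * Y * P₂) P₂ mm2 (Or.inl (ka2 Y))
    · intro Y; exact key1 (P₂ * Y * P₂) P₂ mm2 (Or.inl (ka1 Y))
  have hD0 : T - (a + b) = 0 := by
    have hrw : T - (a + b) = (P₁ + P₂) * (T - (a + b)) * (P₁ + P₂) := by
      rw [hsum, one_mul, mul_one]
    rw [hrw]
    simp only [add_mul, mul_add, hD11, hD12, hD21, hD22, add_zero, zero_add]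
  have hTab : T = a + b := sub_eq_zero.mp hD0
  rw [← hTab, hT]
end

section
/- Let A and A' be unital C*-algebras, P₁ a nontrivial symmetric projection in A, P₂ = I_A − P₁, A_{jk} = P_j A P_k, and suppose A satisfies (♠): for j ∈ {1,2}, P_j A X = {0} implies X = 0. Fix an integer n ≥ 2 and let φ: A → A' be a bijective map with φ(I_A) = I_{A'} satisfying (•): φ(p_{n*}(A,B,Ξ,…,Ξ)) = p_{n*}(φ(A),φ(B),φ(Ξ),…,φ(Ξ)) for all A, B ∈ A and Ξ ∈ {P₁, P₂, I_A}. Then for any A₁₁ ∈ A₁₁, B₁₂ ∈ A₁₂, C₂₁ ∈ A₂₁ and D₂₂ ∈ A₂₂ one has φ(A₁₁ + B₁₂ + C₂₁ + D₂₂) = φ(A₁₁) + φ(B₁₂) + φ(C₂₁) + φ(D₂₂). -/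
section helpers
variable {R : Type*} [Ring R] [StarRing R]

lemma starLie_add_left_s6 (x y z : R) : starLie (x + y) z = starLie x z + starLie y z := by
  simp only [starLie, add_mul, mul_add, star_add]; abel

lemma starLie_add_right_s6 (x y z : R) : starLie x (y + z) = starLie x y + starLie x z := by
  simp only [starLie, add_mul, mul_add, star_add]; abel

lemma iterLie_add (ξ : R) : ∀ (k : ℕ) (x y : R),
    (fun z => starLie z ξ)^[k] (x + y)
      = (fun z => starLie z ξ)^[k] x + (fun z => starLie z ξ)^[k] y := by
  intro k
  induction k with
  | zero => intro x y; simp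
  | succ k ih =>
      intro x y
      rw [Function.iterate_succ_apply', Function.iterate_succ_apply',
        Function.iterate_succ_apply', ih, starLie_add_left_s6]

lemma pn_add_right_s6 (m : ℕ) (s x y ξ : R) :
    pn m s (x + y) ξ = pn m s x ξ + pn m s y ξ := by
  unfold pn
  rw [starLie_add_right_s6, iterLie_add]

lemma iterM_stab (Q u : R) (hQ : star Q = Q) (huQ : u * Q = u) (hQu : Q * u = 0) :
    ∀ k : ℕ, (fun z => starLie z Q)^[k] (u - star u) = u - star u := by
  intro k
  induction k with
  | zero => simp
  | succ k ih =>
      rw [Function.iterate_succ_apply', ih]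
      have h1 : star u * Q = 0 := by
        rw [← hQ, ← star_mul, hQu, star_zero]
      have h2 : Q * star u = star u := by
        rw [← hQ, ← star_mul, huQ]
      simp only [starLie, sub_mul, star_sub, mul_sub, h1, h2, star_star, huQ, hQu]
      abel

lemma iterM (Q u r : R) (hQ : star Q = Q) (huQ : u * Q = u) (hQu : Q * u = 0)
    (hrQ : r * Q = 0) {k : ℕ} (hk : 1 ≤ k) :
    (fun z => starLie z Q)^[k] (u + r) = u - star u := by
  obtain ⟨j, rfl⟩ : ∃ j, k = j + 1 := ⟨k - 1, by omega⟩
  rw [Function.iterate_succ_apply]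
  have h2 : Q * star u = star u := by rw [← hQ, ← star_mul, huQ]
  have h3 : Q * star r = 0 := by rw [← hQ, ← star_mul, hrQ, star_zero]
  have hfirst : starLie (u + r) Q = u - star u := by
    simp only [starLie, add_mul, star_add, mul_add, huQ, hrQ, h2, h3]
    abel
  show (fun z => starLie z Q)^[j] (starLie (u + r) Q) = u - star u
  rw [hfirst]
  exact iterM_stab Q u hQ huQ hQu j

lemma iter_zero (Q r : R) (hQ : star Q = Q) (hrQ : r * Q = 0) {k : ℕ} (hk : 1 ≤ k) :
    (fun z => starLie z Q)^[k] r = 0 := by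
  have := iterM Q 0 r hQ (by simp) (by simp) hrQ hk
  simpa using this

lemma extract {R R' : Type*} [Ring R] [StarRing R] [Ring R'] [StarRing R']
    (φ : R → R') (hinj : Function.Injective φ) (hφ0 : φ 0 = 0)
    (m : ℕ) (hm : 3 ≤ m)
    (P s T xa xb xc xd : R) (hPs : star P = P)
    (hzb : starLie s xb * P = 0) (hzc : starLie s xc * P = 0) (hzd : starLie s xd * P = 0)
    (hsum : φ (pn m s T P) = φ (pn m s xa P) + φ (pn m s xb P) + φ (pn m s xc P)
      + φ (pn m s xd P))
    (hrP : (starLie s (T - xa) - s * (T - xa) * P) * P = 0)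
    (huP : s * (T - xa) * P * P = s * (T - xa) * P)
    (hPu : P * (s * (T - xa) * P) = 0) :
    s * (T - xa) * P - star (s * (T - xa) * P) = 0 := by
  have hk : 1 ≤ m - 2 := by omega
  have zb : pn m s xb P = 0 := iter_zero P _ hPs hzb hk
  have zc : pn m s xc P = 0 := iter_zero P _ hPs hzc hk
  have zd : pn m s xd P = 0 := iter_zero P _ hPs hzd hk
  have hT : φ (pn m s T P) = φ (pn m s xa P) := by
    rw [hsum, zb, zc, zd, hφ0, add_zero, add_zero, add_zero]
  have hTa : pn m s T P = pn m s xa P := hinj hT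
  have hsplit : pn m s T P = pn m s (T - xa) P + pn m s xa P := by
    rw [← pn_add_right_s6, sub_add_cancel]
  rw [hTa] at hsplit
  have hΔ : pn m s (T - xa) P = 0 := (right_eq_add.mp hsplit)
  have hdecomp : starLie s (T - xa)
      = s * (T - xa) * P + (starLie s (T - xa) - s * (T - xa) * P) := by abel
  have hval : pn m s (T - xa) P = s * (T - xa) * P - star (s * (T - xa) * P) := by
    show (fun z => starLie z P)^[m - 2] (starLie s (T - xa)) = _
    rw [hdecomp]
    exact iterM P _ _ hPs huP hPu hrP hk
  rw [← hval, hΔ]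

end helpers

variable {A A' : Type*}
  [NormedRing A] [StarRing A] [CStarRing A] [NormedAlgebra ℂ A]
  [CompleteSpace A] [StarModule ℂ A]
  [NormedRing A'] [StarRing A'] [CStarRing A'] [NormedAlgebra ℂ A']
  [CompleteSpace A'] [StarModule ℂ A']

theorem stmt6
    (P₁ : A) (hP₁proj : P₁ * P₁ = P₁) (hP₁star : star P₁ = P₁)
    (hP₁ne0 : P₁ ≠ 0) (hP₁ne1 : P₁ ≠ 1)
    (P₂ : A) (hP₂ : P₂ = 1 - P₁)
    (hspade : ∀ Pj ∈ ({P₁, P₂} : Set A), ∀ X : A, (∀ Y : A, Pj * Y * X = 0) → X = 0)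
    (n : ℕ) (hn : 2 ≤ n)
    (φ : A → A') (hbij : Function.Bijective φ) (hunit : φ 1 = 1)
    (hbullet : ∀ a b : A, ∀ Ξ ∈ ({P₁, P₂, 1} : Set A),
      φ (pn n a b Ξ) = pn n (φ a) (φ b) (φ Ξ))
    :
    ∀ a b c d : A,
      (∃ x : A, a = P₁ * x * P₁) → (∃ x : A, b = P₁ * x * P₂) →
      (∃ x : A, c = P₂ * x * P₁) → (∃ x : A, d = P₂ * x * P₂) →
      φ (a + b + c + d) = φ a + φ b + φ c + φ d := by
  have hinj := hbij.1
  obtain ⟨m, hm3, hbm⟩ : ∃ m, 3 ≤ m ∧ ∀ a b : A, ∀ Ξ ∈ ({P₁, P₂, (1:A)} : Set A),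
      φ (pn m a b Ξ) = pn m (φ a) (φ b) (φ Ξ) := by
    rcases Nat.lt_or_ge n 3 with h3 | h3
    · have hn2 : n = 2 := by omega
      subst hn2
      refine ⟨3, le_refl 3, ?_⟩
      have base : ∀ x y : A, φ (starLie x y) = starLie (φ x) (φ y) := by
        intro x y
        have h := hbullet x y 1 (by simp)
        simpa [pn] using h
      intro x y Ξ hΞ
      have e1 : pn 3 x y Ξ = starLie (starLie x y) Ξ := by simp [pn]
      have e2 : pn 3 (φ x) (φ y) (φ Ξ) = starLie (starLie (φ x) (φ y)) (φ Ξ) := by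
        simp [pn]
      rw [e1, e2, base, base]
    · exact ⟨n, h3, hbullet⟩
  have hk2 : 1 ≤ m - 2 := by omega
  obtain ⟨z0, hz0⟩ := hbij.2 0
  have hφ0 : φ 0 = 0 := by
    have h := hbm 0 z0 1 (by simp)
    have l1 : pn m 0 z0 1 = 0 :=
      iter_zero 1 _ (star_one A) (by simp [starLie]) hk2
    have l2 : pn m (φ 0) (φ z0) (φ 1) = 0 := by
      rw [hz0]
      exact iter_zero _ _ (by rw [hunit, star_one]) (by simp [starLie]) hk2
    rw [l1] at h
    rw [h, l2]
  have h11 : P₁ * P₁ = P₁ := hP₁proj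
  have h12 : P₁ * P₂ = 0 := by rw [hP₂, mul_sub, mul_one, hP₁proj, sub_self]
  have h21 : P₂ * P₁ = 0 := by rw [hP₂, sub_mul, one_mul, hP₁proj, sub_self]
  have h22 : P₂ * P₂ = P₂ := by
    rw [hP₂, sub_mul, one_mul, mul_sub, mul_one, hP₁proj]; abel
  have hP₂star : star P₂ = P₂ := by rw [hP₂, star_sub, star_one, hP₁star]
  have W : ∀ x p y : A, x * p = y → ∀ z : A, x * (p * z) = y * z := by
    intro x p y h z; rw [← mul_assoc, h]
  intro a b c d ha hb hc hd
  obtain ⟨xa, ha⟩ := ha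
  obtain ⟨xb, hb⟩ := hb
  obtain ⟨xc, hc⟩ := hc
  obtain ⟨xd, hd⟩ := hd
  have a1 : P₁ * a = a := by rw [ha]; simp [← mul_assoc, h11]
  have a2 : a * P₁ = a := by rw [ha]; simp [mul_assoc, h11, W _ _ _ h11]
  have a3 : P₂ * a = 0 := by rw [ha]; simp [← mul_assoc, h21]
  have a4 : a * P₂ = 0 := by rw [ha]; simp [mul_assoc, h12, W _ _ _ h12]
  have b1 : P₁ * b = b := by rw [hb]; simp [← mul_assoc, h11]
  have b2 : b * P₂ = b := by rw [hb]; simp [mul_assoc, h22, W _ _ _ h22]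
  have b3 : P₂ * b = 0 := by rw [hb]; simp [← mul_assoc, h21]
  have b4 : b * P₁ = 0 := by rw [hb]; simp [mul_assoc, h21, W _ _ _ h21]
  have c1 : P₂ * c = c := by rw [hc]; simp [← mul_assoc, h22]
  have c2 : c * P₁ = c := by rw [hc]; simp [mul_assoc, h11, W _ _ _ h11]
  have c3 : P₁ * c = 0 := by rw [hc]; simp [← mul_assoc, h12]
  have c4 : c * P₂ = 0 := by rw [hc]; simp [mul_assoc, h12, W _ _ _ h12]
  have d1 : P₂ * d = d := by rw [hd]; simp [← mul_assoc, h22]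
  have d2 : d * P₂ = d := by rw [hd]; simp [mul_assoc, h22, W _ _ _ h22]
  have d3 : P₁ * d = 0 := by rw [hd]; simp [← mul_assoc, h12]
  have d4 : d * P₁ = 0 := by rw [hd]; simp [mul_assoc, h21, W _ _ _ h21]
  have sa1 : P₁ * star a = star a := by rw [← hP₁star, ← star_mul, a2]
  have sa2 : star a * P₁ = star a := by rw [← hP₁star, ← star_mul, a1]
  have sa3 : P₂ * star a = 0 := by rw [← hP₂star, ← star_mul, a4, star_zero]
  have sa4 : star a * P₂ = 0 := by rw [← hP₂star, ← star_mul, a3, star_zero]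
  have sb1 : P₂ * star b = star b := by rw [← hP₂star, ← star_mul, b2]
  have sb2 : star b * P₁ = star b := by rw [← hP₁star, ← star_mul, b1]
  have sb3 : P₁ * star b = 0 := by rw [← hP₁star, ← star_mul, b4, star_zero]
  have sb4 : star b * P₂ = 0 := by rw [← hP₂star, ← star_mul, b3, star_zero]
  have sc1 : P₁ * star c = star c := by rw [← hP₁star, ← star_mul, c2]
  have sc2 : star c * P₂ = star c := by rw [← hP₂star, ← star_mul, c1]
  have sc3 : P₂ * star c = 0 := by rw [← hP₂star, ← star_mul, c4, star_zero]
  have sc4 : star c * P₁ = 0 := by rw [← hP₁star, ← star_mul, c3, star_zero]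
  have sd1 : P₂ * star d = star d := by rw [← hP₂star, ← star_mul, d2]
  have sd2 : star d * P₂ = star d := by rw [← hP₂star, ← star_mul, d1]
  have sd3 : P₁ * star d = 0 := by rw [← hP₁star, ← star_mul, d4, star_zero]
  have sd4 : star d * P₁ = 0 := by rw [← hP₁star, ← star_mul, d3, star_zero]
  obtain ⟨T, hT⟩ := hbij.2 (φ a + φ b + φ c + φ d)
  have master : ∀ s : A, ∀ Ξ, Ξ ∈ ({P₁, P₂} : Set A) →
      φ (pn m s T Ξ) = φ (pn m s a Ξ) + φ (pn m s b Ξ) + φ (pn m s c Ξ)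
        + φ (pn m s d Ξ) := by
    intro s Ξ hΞ
    have hΞ' : Ξ ∈ ({P₁, P₂, (1:A)} : Set A) := by
      simp only [Set.mem_insert_iff, Set.mem_singleton_iff] at hΞ ⊢
      tauto
    rw [hbm s T Ξ hΞ', hT, pn_add_right_s6, pn_add_right_s6, pn_add_right_s6,
      ← hbm s a Ξ hΞ', ← hbm s b Ξ hΞ', ← hbm s c Ξ hΞ', ← hbm s d Ξ hΞ']
  -- component 11
  have keyA : ∀ Y : A, P₂ * Y * (P₁ * T * P₁ - a) = 0 := by
    intro Y
    have h0 := extract φ hinj hφ0 m hm3 P₁ (P₂ * Y * P₁) T a b c d hP₁star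
      (by simp [starLie, mul_assoc, mul_sub, sub_mul, star_mul, star_sub, hP₁star, hP₂star,
        h11, h12, h21, h22, a1, a2, a3, a4, b1, b2, b3, b4, c1, c2, c3, c4, d1, d2, d3, d4,
        sa1, sa2, sa3, sa4, sb1, sb2, sb3, sb4, sc1, sc2, sc3, sc4, sd1, sd2, sd3, sd4,
        W _ _ _ h11, W _ _ _ h12, W _ _ _ h21, W _ _ _ h22, W _ _ _ a1, W _ _ _ a2,
        W _ _ _ a3, W _ _ _ a4, W _ _ _ b1, W _ _ _ b2, W _ _ _ b3, W _ _ _ b4,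
        W _ _ _ c1, W _ _ _ c2, W _ _ _ c3, W _ _ _ c4, W _ _ _ d1, W _ _ _ d2,
        W _ _ _ d3, W _ _ _ d4, W _ _ _ sa1, W _ _ _ sa2, W _ _ _ sa3, W _ _ _ sa4,
        W _ _ _ sb1, W _ _ _ sb2, W _ _ _ sb3, W _ _ _ sb4, W _ _ _ sc1, W _ _ _ sc2,
        W _ _ _ sc3, W _ _ _ sc4, W _ _ _ sd1, W _ _ _ sd2, W _ _ _ sd3, W _ _ _ sd4]) (by simp [starLie, mul_assoc, mul_sub, sub_mul, star_mul, star_sub, hP₁star, hP₂star,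
        h11, h12, h21, h22, a1, a2, a3, a4, b1, b2, b3, b4, c1, c2, c3, c4, d1, d2, d3, d4,
        sa1, sa2, sa3, sa4, sb1, sb2, sb3, sb4, sc1, sc2, sc3, sc4, sd1, sd2, sd3, sd4,
        W _ _ _ h11, W _ _ _ h12, W _ _ _ h21, W _ _ _ h22, W _ _ _ a1, W _ _ _ a2,
        W _ _ _ a3, W _ _ _ a4, W _ _ _ b1, W _ _ _ b2, W _ _ _ b3, W _ _ _ b4,
        W _ _ _ c1, W _ _ _ c2, W _ _ _ c3, W _ _ _ c4, W _ _ _ d1, W _ _ _ d2,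
        W _ _ _ d3, W _ _ _ d4, W _ _ _ sa1, W _ _ _ sa2, W _ _ _ sa3, W _ _ _ sa4,
        W _ _ _ sb1, W _ _ _ sb2, W _ _ _ sb3, W _ _ _ sb4, W _ _ _ sc1, W _ _ _ sc2,
        W _ _ _ sc3, W _ _ _ sc4, W _ _ _ sd1, W _ _ _ sd2, W _ _ _ sd3, W _ _ _ sd4]) (by simp [starLie, mul_assoc, mul_sub, sub_mul, star_mul, star_sub, hP₁star, hP₂star,
        h11, h12, h21, h22, a1, a2, a3, a4, b1, b2, b3, b4, c1, c2, c3, c4, d1, d2, d3, d4,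
        sa1, sa2, sa3, sa4, sb1, sb2, sb3, sb4, sc1, sc2, sc3, sc4, sd1, sd2, sd3, sd4,
        W _ _ _ h11, W _ _ _ h12, W _ _ _ h21, W _ _ _ h22, W _ _ _ a1, W _ _ _ a2,
        W _ _ _ a3, W _ _ _ a4, W _ _ _ b1, W _ _ _ b2, W _ _ _ b3, W _ _ _ b4,
        W _ _ _ c1, W _ _ _ c2, W _ _ _ c3, W _ _ _ c4, W _ _ _ d1, W _ _ _ d2,
        W _ _ _ d3, W _ _ _ d4, W _ _ _ sa1, W _ _ _ sa2, W _ _ _ sa3, W _ _ _ sa4,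
        W _ _ _ sb1, W _ _ _ sb2, W _ _ _ sb3, W _ _ _ sb4, W _ _ _ sc1, W _ _ _ sc2,
        W _ _ _ sc3, W _ _ _ sc4, W _ _ _ sd1, W _ _ _ sd2, W _ _ _ sd3, W _ _ _ sd4])
      (master (P₂ * Y * P₁) P₁ (by simp))
      (by simp [starLie, mul_assoc, mul_sub, sub_mul, star_mul, star_sub, hP₁star, hP₂star,
        h11, h12, h21, h22, a1, a2, a3, a4, b1, b2, b3, b4, c1, c2, c3, c4, d1, d2, d3, d4,
        sa1, sa2, sa3, sa4, sb1, sb2, sb3, sb4, sc1, sc2, sc3, sc4, sd1, sd2, sd3, sd4,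
        W _ _ _ h11, W _ _ _ h12, W _ _ _ h21, W _ _ _ h22, W _ _ _ a1, W _ _ _ a2,
        W _ _ _ a3, W _ _ _ a4, W _ _ _ b1, W _ _ _ b2, W _ _ _ b3, W _ _ _ b4,
        W _ _ _ c1, W _ _ _ c2, W _ _ _ c3, W _ _ _ c4, W _ _ _ d1, W _ _ _ d2,
        W _ _ _ d3, W _ _ _ d4, W _ _ _ sa1, W _ _ _ sa2, W _ _ _ sa3, W _ _ _ sa4,
        W _ _ _ sb1, W _ _ _ sb2, W _ _ _ sb3, W _ _ _ sb4, W _ _ _ sc1, W _ _ _ sc2,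
        W _ _ _ sc3, W _ _ _ sc4, W _ _ _ sd1, W _ _ _ sd2, W _ _ _ sd3, W _ _ _ sd4])
      (by simp [mul_assoc, h11, W _ _ _ h11])
      (by simp [starLie, mul_assoc, mul_sub, sub_mul, star_mul, star_sub, hP₁star, hP₂star,
        h11, h12, h21, h22, a1, a2, a3, a4, b1, b2, b3, b4, c1, c2, c3, c4, d1, d2, d3, d4,
        sa1, sa2, sa3, sa4, sb1, sb2, sb3, sb4, sc1, sc2, sc3, sc4, sd1, sd2, sd3, sd4,
        W _ _ _ h11, W _ _ _ h12, W _ _ _ h21, W _ _ _ h22, W _ _ _ a1, W _ _ _ a2,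
        W _ _ _ a3, W _ _ _ a4, W _ _ _ b1, W _ _ _ b2, W _ _ _ b3, W _ _ _ b4,
        W _ _ _ c1, W _ _ _ c2, W _ _ _ c3, W _ _ _ c4, W _ _ _ d1, W _ _ _ d2,
        W _ _ _ d3, W _ _ _ d4, W _ _ _ sa1, W _ _ _ sa2, W _ _ _ sa3, W _ _ _ sa4,
        W _ _ _ sb1, W _ _ _ sb2, W _ _ _ sb3, W _ _ _ sb4, W _ _ _ sc1, W _ _ _ sc2,
        W _ _ _ sc3, W _ _ _ sc4, W _ _ _ sd1, W _ _ _ sd2, W _ _ _ sd3, W _ _ _ sd4])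
    have h1 : P₂ * Y * (P₁ * T * P₁ - a)
        = P₂ * ((P₂ * Y * P₁) * (T - a) * P₁ - star ((P₂ * Y * P₁) * (T - a) * P₁)) := by
      simp [starLie, mul_assoc, mul_sub, sub_mul, star_mul, star_sub, hP₁star, hP₂star,
        h11, h12, h21, h22, a1, a2, a3, a4, b1, b2, b3, b4, c1, c2, c3, c4, d1, d2, d3, d4,
        sa1, sa2, sa3, sa4, sb1, sb2, sb3, sb4, sc1, sc2, sc3, sc4, sd1, sd2, sd3, sd4,
        W _ _ _ h11, W _ _ _ h12, W _ _ _ h21, W _ _ _ h22, W _ _ _ a1, W _ _ _ a2,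
        W _ _ _ a3, W _ _ _ a4, W _ _ _ b1, W _ _ _ b2, W _ _ _ b3, W _ _ _ b4,
        W _ _ _ c1, W _ _ _ c2, W _ _ _ c3, W _ _ _ c4, W _ _ _ d1, W _ _ _ d2,
        W _ _ _ d3, W _ _ _ d4, W _ _ _ sa1, W _ _ _ sa2, W _ _ _ sa3, W _ _ _ sa4,
        W _ _ _ sb1, W _ _ _ sb2, W _ _ _ sb3, W _ _ _ sb4, W _ _ _ sc1, W _ _ _ sc2,
        W _ _ _ sc3, W _ _ _ sc4, W _ _ _ sd1, W _ _ _ sd2, W _ _ _ sd3, W _ _ _ sd4]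
    rw [h1, h0, mul_zero]
  have compA : P₁ * T * P₁ = a :=
    sub_eq_zero.mp (hspade P₂ (by simp) _ keyA)
  -- component 22
  have keyD : ∀ Y : A, P₁ * Y * (P₂ * T * P₂ - d) = 0 := by
    intro Y
    have h0 := extract φ hinj hφ0 m hm3 P₂ (P₁ * Y * P₂) T d c b a hP₂star
      (by simp [starLie, mul_assoc, mul_sub, sub_mul, star_mul, star_sub, hP₁star, hP₂star,
        h11, h12, h21, h22, a1, a2, a3, a4, b1, b2, b3, b4, c1, c2, c3, c4, d1, d2, d3, d4,
        sa1, sa2, sa3, sa4, sb1, sb2, sb3, sb4, sc1, sc2, sc3, sc4, sd1, sd2, sd3, sd4,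
        W _ _ _ h11, W _ _ _ h12, W _ _ _ h21, W _ _ _ h22, W _ _ _ a1, W _ _ _ a2,
        W _ _ _ a3, W _ _ _ a4, W _ _ _ b1, W _ _ _ b2, W _ _ _ b3, W _ _ _ b4,
        W _ _ _ c1, W _ _ _ c2, W _ _ _ c3, W _ _ _ c4, W _ _ _ d1, W _ _ _ d2,
        W _ _ _ d3, W _ _ _ d4, W _ _ _ sa1, W _ _ _ sa2, W _ _ _ sa3, W _ _ _ sa4,
        W _ _ _ sb1, W _ _ _ sb2, W _ _ _ sb3, W _ _ _ sb4, W _ _ _ sc1, W _ _ _ sc2,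
        W _ _ _ sc3, W _ _ _ sc4, W _ _ _ sd1, W _ _ _ sd2, W _ _ _ sd3, W _ _ _ sd4]) (by simp [starLie, mul_assoc, mul_sub, sub_mul, star_mul, star_sub, hP₁star, hP₂star,
        h11, h12, h21, h22, a1, a2, a3, a4, b1, b2, b3, b4, c1, c2, c3, c4, d1, d2, d3, d4,
        sa1, sa2, sa3, sa4, sb1, sb2, sb3, sb4, sc1, sc2, sc3, sc4, sd1, sd2, sd3, sd4,
        W _ _ _ h11, W _ _ _ h12, W _ _ _ h21, W _ _ _ h22, W _ _ _ a1, W _ _ _ a2,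
        W _ _ _ a3, W _ _ _ a4, W _ _ _ b1, W _ _ _ b2, W _ _ _ b3, W _ _ _ b4,
        W _ _ _ c1, W _ _ _ c2, W _ _ _ c3, W _ _ _ c4, W _ _ _ d1, W _ _ _ d2,
        W _ _ _ d3, W _ _ _ d4, W _ _ _ sa1, W _ _ _ sa2, W _ _ _ sa3, W _ _ _ sa4,
        W _ _ _ sb1, W _ _ _ sb2, W _ _ _ sb3, W _ _ _ sb4, W _ _ _ sc1, W _ _ _ sc2,
        W _ _ _ sc3, W _ _ _ sc4, W _ _ _ sd1, W _ _ _ sd2, W _ _ _ sd3, W _ _ _ sd4]) (by simp [starLie, mul_assoc, mul_sub, sub_mul, star_mul, star_sub, hP₁star, hP₂star,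
        h11, h12, h21, h22, a1, a2, a3, a4, b1, b2, b3, b4, c1, c2, c3, c4, d1, d2, d3, d4,
        sa1, sa2, sa3, sa4, sb1, sb2, sb3, sb4, sc1, sc2, sc3, sc4, sd1, sd2, sd3, sd4,
        W _ _ _ h11, W _ _ _ h12, W _ _ _ h21, W _ _ _ h22, W _ _ _ a1, W _ _ _ a2,
        W _ _ _ a3, W _ _ _ a4, W _ _ _ b1, W _ _ _ b2, W _ _ _ b3, W _ _ _ b4,
        W _ _ _ c1, W _ _ _ c2, W _ _ _ c3, W _ _ _ c4, W _ _ _ d1, W _ _ _ d2,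
        W _ _ _ d3, W _ _ _ d4, W _ _ _ sa1, W _ _ _ sa2, W _ _ _ sa3, W _ _ _ sa4,
        W _ _ _ sb1, W _ _ _ sb2, W _ _ _ sb3, W _ _ _ sb4, W _ _ _ sc1, W _ _ _ sc2,
        W _ _ _ sc3, W _ _ _ sc4, W _ _ _ sd1, W _ _ _ sd2, W _ _ _ sd3, W _ _ _ sd4])
      (by rw [master (P₁ * Y * P₂) P₂ (by simp)]; abel)
      (by simp [starLie, mul_assoc, mul_sub, sub_mul, star_mul, star_sub, hP₁star, hP₂star,
        h11, h12, h21, h22, a1, a2, a3, a4, b1, b2, b3, b4, c1, c2, c3, c4, d1, d2, d3, d4,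
        sa1, sa2, sa3, sa4, sb1, sb2, sb3, sb4, sc1, sc2, sc3, sc4, sd1, sd2, sd3, sd4,
        W _ _ _ h11, W _ _ _ h12, W _ _ _ h21, W _ _ _ h22, W _ _ _ a1, W _ _ _ a2,
        W _ _ _ a3, W _ _ _ a4, W _ _ _ b1, W _ _ _ b2, W _ _ _ b3, W _ _ _ b4,
        W _ _ _ c1, W _ _ _ c2, W _ _ _ c3, W _ _ _ c4, W _ _ _ d1, W _ _ _ d2,
        W _ _ _ d3, W _ _ _ d4, W _ _ _ sa1, W _ _ _ sa2, W _ _ _ sa3, W _ _ _ sa4,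
        W _ _ _ sb1, W _ _ _ sb2, W _ _ _ sb3, W _ _ _ sb4, W _ _ _ sc1, W _ _ _ sc2,
        W _ _ _ sc3, W _ _ _ sc4, W _ _ _ sd1, W _ _ _ sd2, W _ _ _ sd3, W _ _ _ sd4])
      (by simp [mul_assoc, h22, W _ _ _ h22])
      (by simp [starLie, mul_assoc, mul_sub, sub_mul, star_mul, star_sub, hP₁star, hP₂star,
        h11, h12, h21, h22, a1, a2, a3, a4, b1, b2, b3, b4, c1, c2, c3, c4, d1, d2, d3, d4,
        sa1, sa2, sa3, sa4, sb1, sb2, sb3, sb4, sc1, sc2, sc3, sc4, sd1, sd2, sd3, sd4,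
        W _ _ _ h11, W _ _ _ h12, W _ _ _ h21, W _ _ _ h22, W _ _ _ a1, W _ _ _ a2,
        W _ _ _ a3, W _ _ _ a4, W _ _ _ b1, W _ _ _ b2, W _ _ _ b3, W _ _ _ b4,
        W _ _ _ c1, W _ _ _ c2, W _ _ _ c3, W _ _ _ c4, W _ _ _ d1, W _ _ _ d2,
        W _ _ _ d3, W _ _ _ d4, W _ _ _ sa1, W _ _ _ sa2, W _ _ _ sa3, W _ _ _ sa4,
        W _ _ _ sb1, W _ _ _ sb2, W _ _ _ sb3, W _ _ _ sb4, W _ _ _ sc1, W _ _ _ sc2,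
        W _ _ _ sc3, W _ _ _ sc4, W _ _ _ sd1, W _ _ _ sd2, W _ _ _ sd3, W _ _ _ sd4])
    have h1 : P₁ * Y * (P₂ * T * P₂ - d)
        = P₁ * ((P₁ * Y * P₂) * (T - d) * P₂ - star ((P₁ * Y * P₂) * (T - d) * P₂)) := by
      simp [starLie, mul_assoc, mul_sub, sub_mul, star_mul, star_sub, hP₁star, hP₂star,
        h11, h12, h21, h22, a1, a2, a3, a4, b1, b2, b3, b4, c1, c2, c3, c4, d1, d2, d3, d4,
        sa1, sa2, sa3, sa4, sb1, sb2, sb3, sb4, sc1, sc2, sc3, sc4, sd1, sd2, sd3, sd4,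
        W _ _ _ h11, W _ _ _ h12, W _ _ _ h21, W _ _ _ h22, W _ _ _ a1, W _ _ _ a2,
        W _ _ _ a3, W _ _ _ a4, W _ _ _ b1, W _ _ _ b2, W _ _ _ b3, W _ _ _ b4,
        W _ _ _ c1, W _ _ _ c2, W _ _ _ c3, W _ _ _ c4, W _ _ _ d1, W _ _ _ d2,
        W _ _ _ d3, W _ _ _ d4, W _ _ _ sa1, W _ _ _ sa2, W _ _ _ sa3, W _ _ _ sa4,
        W _ _ _ sb1, W _ _ _ sb2, W _ _ _ sb3, W _ _ _ sb4, W _ _ _ sc1, W _ _ _ sc2,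
        W _ _ _ sc3, W _ _ _ sc4, W _ _ _ sd1, W _ _ _ sd2, W _ _ _ sd3, W _ _ _ sd4]
    rw [h1, h0, mul_zero]
  have compD : P₂ * T * P₂ = d :=
    sub_eq_zero.mp (hspade P₁ (by simp) _ keyD)
  -- component 21
  have keyC : ∀ Y : A, P₂ * Y * (P₂ * T * P₁ - c) = 0 := by
    intro Y
    have h0 := extract φ hinj hφ0 m hm3 P₁ (P₂ * Y * P₂) T c a b d hP₁star
      (by simp [starLie, mul_assoc, mul_sub, sub_mul, star_mul, star_sub, hP₁star, hP₂star,
        h11, h12, h21, h22, a1, a2, a3, a4, b1, b2, b3, b4, c1, c2, c3, c4, d1, d2, d3, d4,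
        sa1, sa2, sa3, sa4, sb1, sb2, sb3, sb4, sc1, sc2, sc3, sc4, sd1, sd2, sd3, sd4,
        W _ _ _ h11, W _ _ _ h12, W _ _ _ h21, W _ _ _ h22, W _ _ _ a1, W _ _ _ a2,
        W _ _ _ a3, W _ _ _ a4, W _ _ _ b1, W _ _ _ b2, W _ _ _ b3, W _ _ _ b4,
        W _ _ _ c1, W _ _ _ c2, W _ _ _ c3, W _ _ _ c4, W _ _ _ d1, W _ _ _ d2,
        W _ _ _ d3, W _ _ _ d4, W _ _ _ sa1, W _ _ _ sa2, W _ _ _ sa3, W _ _ _ sa4,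
        W _ _ _ sb1, W _ _ _ sb2, W _ _ _ sb3, W _ _ _ sb4, W _ _ _ sc1, W _ _ _ sc2,
        W _ _ _ sc3, W _ _ _ sc4, W _ _ _ sd1, W _ _ _ sd2, W _ _ _ sd3, W _ _ _ sd4]) (by simp [starLie, mul_assoc, mul_sub, sub_mul, star_mul, star_sub, hP₁star, hP₂star,
        h11, h12, h21, h22, a1, a2, a3, a4, b1, b2, b3, b4, c1, c2, c3, c4, d1, d2, d3, d4,
        sa1, sa2, sa3, sa4, sb1, sb2, sb3, sb4, sc1, sc2, sc3, sc4, sd1, sd2, sd3, sd4,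
        W _ _ _ h11, W _ _ _ h12, W _ _ _ h21, W _ _ _ h22, W _ _ _ a1, W _ _ _ a2,
        W _ _ _ a3, W _ _ _ a4, W _ _ _ b1, W _ _ _ b2, W _ _ _ b3, W _ _ _ b4,
        W _ _ _ c1, W _ _ _ c2, W _ _ _ c3, W _ _ _ c4, W _ _ _ d1, W _ _ _ d2,
        W _ _ _ d3, W _ _ _ d4, W _ _ _ sa1, W _ _ _ sa2, W _ _ _ sa3, W _ _ _ sa4,
        W _ _ _ sb1, W _ _ _ sb2, W _ _ _ sb3, W _ _ _ sb4, W _ _ _ sc1, W _ _ _ sc2,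
        W _ _ _ sc3, W _ _ _ sc4, W _ _ _ sd1, W _ _ _ sd2, W _ _ _ sd3, W _ _ _ sd4]) (by simp [starLie, mul_assoc, mul_sub, sub_mul, star_mul, star_sub, hP₁star, hP₂star,
        h11, h12, h21, h22, a1, a2, a3, a4, b1, b2, b3, b4, c1, c2, c3, c4, d1, d2, d3, d4,
        sa1, sa2, sa3, sa4, sb1, sb2, sb3, sb4, sc1, sc2, sc3, sc4, sd1, sd2, sd3, sd4,
        W _ _ _ h11, W _ _ _ h12, W _ _ _ h21, W _ _ _ h22, W _ _ _ a1, W _ _ _ a2,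
        W _ _ _ a3, W _ _ _ a4, W _ _ _ b1, W _ _ _ b2, W _ _ _ b3, W _ _ _ b4,
        W _ _ _ c1, W _ _ _ c2, W _ _ _ c3, W _ _ _ c4, W _ _ _ d1, W _ _ _ d2,
        W _ _ _ d3, W _ _ _ d4, W _ _ _ sa1, W _ _ _ sa2, W _ _ _ sa3, W _ _ _ sa4,
        W _ _ _ sb1, W _ _ _ sb2, W _ _ _ sb3, W _ _ _ sb4, W _ _ _ sc1, W _ _ _ sc2,
        W _ _ _ sc3, W _ _ _ sc4, W _ _ _ sd1, W _ _ _ sd2, W _ _ _ sd3, W _ _ _ sd4])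
      (by rw [master (P₂ * Y * P₂) P₁ (by simp)]; abel)
      (by simp [starLie, mul_assoc, mul_sub, sub_mul, star_mul, star_sub, hP₁star, hP₂star,
        h11, h12, h21, h22, a1, a2, a3, a4, b1, b2, b3, b4, c1, c2, c3, c4, d1, d2, d3, d4,
        sa1, sa2, sa3, sa4, sb1, sb2, sb3, sb4, sc1, sc2, sc3, sc4, sd1, sd2, sd3, sd4,
        W _ _ _ h11, W _ _ _ h12, W _ _ _ h21, W _ _ _ h22, W _ _ _ a1, W _ _ _ a2,
        W _ _ _ a3, W _ _ _ a4, W _ _ _ b1, W _ _ _ b2, W _ _ _ b3, W _ _ _ b4,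
        W _ _ _ c1, W _ _ _ c2, W _ _ _ c3, W _ _ _ c4, W _ _ _ d1, W _ _ _ d2,
        W _ _ _ d3, W _ _ _ d4, W _ _ _ sa1, W _ _ _ sa2, W _ _ _ sa3, W _ _ _ sa4,
        W _ _ _ sb1, W _ _ _ sb2, W _ _ _ sb3, W _ _ _ sb4, W _ _ _ sc1, W _ _ _ sc2,
        W _ _ _ sc3, W _ _ _ sc4, W _ _ _ sd1, W _ _ _ sd2, W _ _ _ sd3, W _ _ _ sd4])
      (by simp [mul_assoc, h11, W _ _ _ h11])
      (by simp [starLie, mul_assoc, mul_sub, sub_mul, star_mul, star_sub, hP₁star, hP₂star,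
        h11, h12, h21, h22, a1, a2, a3, a4, b1, b2, b3, b4, c1, c2, c3, c4, d1, d2, d3, d4,
        sa1, sa2, sa3, sa4, sb1, sb2, sb3, sb4, sc1, sc2, sc3, sc4, sd1, sd2, sd3, sd4,
        W _ _ _ h11, W _ _ _ h12, W _ _ _ h21, W _ _ _ h22, W _ _ _ a1, W _ _ _ a2,
        W _ _ _ a3, W _ _ _ a4, W _ _ _ b1, W _ _ _ b2, W _ _ _ b3, W _ _ _ b4,
        W _ _ _ c1, W _ _ _ c2, W _ _ _ c3, W _ _ _ c4, W _ _ _ d1, W _ _ _ d2,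
        W _ _ _ d3, W _ _ _ d4, W _ _ _ sa1, W _ _ _ sa2, W _ _ _ sa3, W _ _ _ sa4,
        W _ _ _ sb1, W _ _ _ sb2, W _ _ _ sb3, W _ _ _ sb4, W _ _ _ sc1, W _ _ _ sc2,
        W _ _ _ sc3, W _ _ _ sc4, W _ _ _ sd1, W _ _ _ sd2, W _ _ _ sd3, W _ _ _ sd4])
    have h1 : P₂ * Y * (P₂ * T * P₁ - c)
        = P₂ * ((P₂ * Y * P₂) * (T - c) * P₁ - star ((P₂ * Y * P₂) * (T - c) * P₁)) := by
      simp [starLie, mul_assoc, mul_sub, sub_mul, star_mul, star_sub, hP₁star, hP₂star,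
        h11, h12, h21, h22, a1, a2, a3, a4, b1, b2, b3, b4, c1, c2, c3, c4, d1, d2, d3, d4,
        sa1, sa2, sa3, sa4, sb1, sb2, sb3, sb4, sc1, sc2, sc3, sc4, sd1, sd2, sd3, sd4,
        W _ _ _ h11, W _ _ _ h12, W _ _ _ h21, W _ _ _ h22, W _ _ _ a1, W _ _ _ a2,
        W _ _ _ a3, W _ _ _ a4, W _ _ _ b1, W _ _ _ b2, W _ _ _ b3, W _ _ _ b4,
        W _ _ _ c1, W _ _ _ c2, W _ _ _ c3, W _ _ _ c4, W _ _ _ d1, W _ _ _ d2,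
        W _ _ _ d3, W _ _ _ d4, W _ _ _ sa1, W _ _ _ sa2, W _ _ _ sa3, W _ _ _ sa4,
        W _ _ _ sb1, W _ _ _ sb2, W _ _ _ sb3, W _ _ _ sb4, W _ _ _ sc1, W _ _ _ sc2,
        W _ _ _ sc3, W _ _ _ sc4, W _ _ _ sd1, W _ _ _ sd2, W _ _ _ sd3, W _ _ _ sd4]
    rw [h1, h0, mul_zero]
  have compC : P₂ * T * P₁ = c :=
    sub_eq_zero.mp (hspade P₂ (by simp) _ keyC)
  -- component 12
  have keyB : ∀ Y : A, P₁ * Y * (P₁ * T * P₂ - b) = 0 := by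
    intro Y
    have h0 := extract φ hinj hφ0 m hm3 P₂ (P₁ * Y * P₁) T b a c d hP₂star
      (by simp [starLie, mul_assoc, mul_sub, sub_mul, star_mul, star_sub, hP₁star, hP₂star,
        h11, h12, h21, h22, a1, a2, a3, a4, b1, b2, b3, b4, c1, c2, c3, c4, d1, d2, d3, d4,
        sa1, sa2, sa3, sa4, sb1, sb2, sb3, sb4, sc1, sc2, sc3, sc4, sd1, sd2, sd3, sd4,
        W _ _ _ h11, W _ _ _ h12, W _ _ _ h21, W _ _ _ h22, W _ _ _ a1, W _ _ _ a2,
        W _ _ _ a3, W _ _ _ a4, W _ _ _ b1, W _ _ _ b2, W _ _ _ b3, W _ _ _ b4,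
        W _ _ _ c1, W _ _ _ c2, W _ _ _ c3, W _ _ _ c4, W _ _ _ d1, W _ _ _ d2,
        W _ _ _ d3, W _ _ _ d4, W _ _ _ sa1, W _ _ _ sa2, W _ _ _ sa3, W _ _ _ sa4,
        W _ _ _ sb1, W _ _ _ sb2, W _ _ _ sb3, W _ _ _ sb4, W _ _ _ sc1, W _ _ _ sc2,
        W _ _ _ sc3, W _ _ _ sc4, W _ _ _ sd1, W _ _ _ sd2, W _ _ _ sd3, W _ _ _ sd4]) (by simp [starLie, mul_assoc, mul_sub, sub_mul, star_mul, star_sub, hP₁star, hP₂star,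
        h11, h12, h21, h22, a1, a2, a3, a4, b1, b2, b3, b4, c1, c2, c3, c4, d1, d2, d3, d4,
        sa1, sa2, sa3, sa4, sb1, sb2, sb3, sb4, sc1, sc2, sc3, sc4, sd1, sd2, sd3, sd4,
        W _ _ _ h11, W _ _ _ h12, W _ _ _ h21, W _ _ _ h22, W _ _ _ a1, W _ _ _ a2,
        W _ _ _ a3, W _ _ _ a4, W _ _ _ b1, W _ _ _ b2, W _ _ _ b3, W _ _ _ b4,
        W _ _ _ c1, W _ _ _ c2, W _ _ _ c3, W _ _ _ c4, W _ _ _ d1, W _ _ _ d2,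
        W _ _ _ d3, W _ _ _ d4, W _ _ _ sa1, W _ _ _ sa2, W _ _ _ sa3, W _ _ _ sa4,
        W _ _ _ sb1, W _ _ _ sb2, W _ _ _ sb3, W _ _ _ sb4, W _ _ _ sc1, W _ _ _ sc2,
        W _ _ _ sc3, W _ _ _ sc4, W _ _ _ sd1, W _ _ _ sd2, W _ _ _ sd3, W _ _ _ sd4]) (by simp [starLie, mul_assoc, mul_sub, sub_mul, star_mul, star_sub, hP₁star, hP₂star,
        h11, h12, h21, h22, a1, a2, a3, a4, b1, b2, b3, b4, c1, c2, c3, c4, d1, d2, d3, d4,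
        sa1, sa2, sa3, sa4, sb1, sb2, sb3, sb4, sc1, sc2, sc3, sc4, sd1, sd2, sd3, sd4,
        W _ _ _ h11, W _ _ _ h12, W _ _ _ h21, W _ _ _ h22, W _ _ _ a1, W _ _ _ a2,
        W _ _ _ a3, W _ _ _ a4, W _ _ _ b1, W _ _ _ b2, W _ _ _ b3, W _ _ _ b4,
        W _ _ _ c1, W _ _ _ c2, W _ _ _ c3, W _ _ _ c4, W _ _ _ d1, W _ _ _ d2,
        W _ _ _ d3, W _ _ _ d4, W _ _ _ sa1, W _ _ _ sa2, W _ _ _ sa3, W _ _ _ sa4,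
        W _ _ _ sb1, W _ _ _ sb2, W _ _ _ sb3, W _ _ _ sb4, W _ _ _ sc1, W _ _ _ sc2,
        W _ _ _ sc3, W _ _ _ sc4, W _ _ _ sd1, W _ _ _ sd2, W _ _ _ sd3, W _ _ _ sd4])
      (by rw [master (P₁ * Y * P₁) P₂ (by simp)]; abel)
      (by simp [starLie, mul_assoc, mul_sub, sub_mul, star_mul, star_sub, hP₁star, hP₂star,
        h11, h12, h21, h22, a1, a2, a3, a4, b1, b2, b3, b4, c1, c2, c3, c4, d1, d2, d3, d4,
        sa1, sa2, sa3, sa4, sb1, sb2, sb3, sb4, sc1, sc2, sc3, sc4, sd1, sd2, sd3, sd4,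
        W _ _ _ h11, W _ _ _ h12, W _ _ _ h21, W _ _ _ h22, W _ _ _ a1, W _ _ _ a2,
        W _ _ _ a3, W _ _ _ a4, W _ _ _ b1, W _ _ _ b2, W _ _ _ b3, W _ _ _ b4,
        W _ _ _ c1, W _ _ _ c2, W _ _ _ c3, W _ _ _ c4, W _ _ _ d1, W _ _ _ d2,
        W _ _ _ d3, W _ _ _ d4, W _ _ _ sa1, W _ _ _ sa2, W _ _ _ sa3, W _ _ _ sa4,
        W _ _ _ sb1, W _ _ _ sb2, W _ _ _ sb3, W _ _ _ sb4, W _ _ _ sc1, W _ _ _ sc2,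
        W _ _ _ sc3, W _ _ _ sc4, W _ _ _ sd1, W _ _ _ sd2, W _ _ _ sd3, W _ _ _ sd4])
      (by simp [mul_assoc, h22, W _ _ _ h22])
      (by simp [starLie, mul_assoc, mul_sub, sub_mul, star_mul, star_sub, hP₁star, hP₂star,
        h11, h12, h21, h22, a1, a2, a3, a4, b1, b2, b3, b4, c1, c2, c3, c4, d1, d2, d3, d4,
        sa1, sa2, sa3, sa4, sb1, sb2, sb3, sb4, sc1, sc2, sc3, sc4, sd1, sd2, sd3, sd4,
        W _ _ _ h11, W _ _ _ h12, W _ _ _ h21, W _ _ _ h22, W _ _ _ a1, W _ _ _ a2,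
        W _ _ _ a3, W _ _ _ a4, W _ _ _ b1, W _ _ _ b2, W _ _ _ b3, W _ _ _ b4,
        W _ _ _ c1, W _ _ _ c2, W _ _ _ c3, W _ _ _ c4, W _ _ _ d1, W _ _ _ d2,
        W _ _ _ d3, W _ _ _ d4, W _ _ _ sa1, W _ _ _ sa2, W _ _ _ sa3, W _ _ _ sa4,
        W _ _ _ sb1, W _ _ _ sb2, W _ _ _ sb3, W _ _ _ sb4, W _ _ _ sc1, W _ _ _ sc2,
        W _ _ _ sc3, W _ _ _ sc4, W _ _ _ sd1, W _ _ _ sd2, W _ _ _ sd3, W _ _ _ sd4])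
    have h1 : P₁ * Y * (P₁ * T * P₂ - b)
        = P₁ * ((P₁ * Y * P₁) * (T - b) * P₂ - star ((P₁ * Y * P₁) * (T - b) * P₂)) := by
      simp [starLie, mul_assoc, mul_sub, sub_mul, star_mul, star_sub, hP₁star, hP₂star,
        h11, h12, h21, h22, a1, a2, a3, a4, b1, b2, b3, b4, c1, c2, c3, c4, d1, d2, d3, d4,
        sa1, sa2, sa3, sa4, sb1, sb2, sb3, sb4, sc1, sc2, sc3, sc4, sd1, sd2, sd3, sd4,
        W _ _ _ h11, W _ _ _ h12, W _ _ _ h21, W _ _ _ h22, W _ _ _ a1, W _ _ _ a2,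
        W _ _ _ a3, W _ _ _ a4, W _ _ _ b1, W _ _ _ b2, W _ _ _ b3, W _ _ _ b4,
        W _ _ _ c1, W _ _ _ c2, W _ _ _ c3, W _ _ _ c4, W _ _ _ d1, W _ _ _ d2,
        W _ _ _ d3, W _ _ _ d4, W _ _ _ sa1, W _ _ _ sa2, W _ _ _ sa3, W _ _ _ sa4,
        W _ _ _ sb1, W _ _ _ sb2, W _ _ _ sb3, W _ _ _ sb4, W _ _ _ sc1, W _ _ _ sc2,
        W _ _ _ sc3, W _ _ _ sc4, W _ _ _ sd1, W _ _ _ sd2, W _ _ _ sd3, W _ _ _ sd4]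
    rw [h1, h0, mul_zero]
  have compB : P₁ * T * P₂ = b :=
    sub_eq_zero.mp (hspade P₁ (by simp) _ keyB)
  have hsum1 : P₁ + P₂ = 1 := by rw [hP₂]; abel
  have hTsum : T = a + b + c + d := by
    have e : (P₁ + P₂) * T * (P₁ + P₂)
        = P₁ * T * P₁ + P₁ * T * P₂ + P₂ * T * P₁ + P₂ * T * P₂ := by
      simp only [add_mul, mul_add]; abel
    rw [← compA, ← compB, ← compC, ← compD, ← e, hsum1, one_mul, mul_one]
  rw [← hTsum, hT]
end
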